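/- arXiv:1704.04473 — 7 statements merged into one kernel-verified Lean document; each statement's English description precedes it below -/
import Mathlib

section
/- Every finite simple unweighted undirected graph G on n vertices has an additive 2-spanner with at most 2·n^{3/2} edges. -/
open SimpleGraph

private lemma exists_parent {V : Type*} {G : SimpleGraph V} {c v : V} (h : G.Reachable c v)
    (hne : v ≠ c) : ∃ u, G.Adj u v ∧ G.edist c u + 1 = G.edist c v := by
  obtain ⟨p, hp⟩ := (h.symm).exists_walk_length_eq_edist
  cases p with
  | nil => exact absurd rfl hne
  | @cons _ u _ hadj q =>
      refine ⟨u, hadj.symm, le_antisymm ?_ ?_⟩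
      · have h1 : G.edist c u ≤ (q.length : ℕ∞) := G.edist_comm ▸ q.edist_le
        calc G.edist c u + 1 ≤ (q.length : ℕ∞) + 1 := by gcongr
          _ = G.edist c v := by rw [G.edist_comm]; rw [← hp]; push_cast [SimpleGraph.Walk.length_cons]; ring
      · calc G.edist c v ≤ G.edist c u + G.edist u v := SimpleGraph.edist_triangle
          _ ≤ G.edist c u + 1 := by gcongr; exact le_of_eq (edist_eq_one_iff_adj.mpr hadj.symm)

private lemma exists_tree {V : Type*} [Fintype V] (G : SimpleGraph V) (c : V) :
    ∃ T : Set (Sym2 V), T ⊆ G.edgeSet ∧ T.ncard ≤ Fintype.card V ∧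
      ∀ H : SimpleGraph V, T ⊆ H.edgeSet →
        ∀ v, G.Reachable c v → H.edist c v ≤ G.edist c v := by
  classical
  have hpar : ∀ v : V, ∃ u, (G.Reachable c v ∧ v ≠ c) →
      G.Adj u v ∧ G.edist c u + 1 = G.edist c v := by
    intro v
    by_cases h : G.Reachable c v ∧ v ≠ c
    · obtain ⟨u, hu⟩ := exists_parent h.1 h.2
      exact ⟨u, fun _ => hu⟩
    · exact ⟨c, fun h' => absurd h' h⟩
  choose par hpar using hpar
  set S : Set V := {v | G.Reachable c v ∧ v ≠ c} with hS
  refine ⟨(fun v => s(v, par v)) '' S, ?_, ?_, ?_⟩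
  · rintro e ⟨v, hv, rfl⟩
    exact ((hpar v hv).1).symm
  · calc ((fun v => s(v, par v)) '' S).ncard ≤ S.ncard := Set.ncard_image_le (Set.toFinite S)
      _ ≤ (Set.univ : Set V).ncard := Set.ncard_le_ncard (Set.subset_univ S) (Set.toFinite _)
      _ = Fintype.card V := by rw [Set.ncard_univ, Nat.card_eq_fintype_card]
  · intro H hT v hv
    obtain ⟨k, hk⟩ : ∃ k : ℕ, G.edist c v = k := by
      have := edist_ne_top_iff_reachable.mpr hv
      exact ⟨(G.edist c v).toNat, (ENat.coe_toNat this).symm⟩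
    rw [hk]
    clear hv
    induction k generalizing v with
    | zero =>
        have : v = c := edist_eq_zero_iff.mp (by exact_mod_cast hk) |>.symm
        subst this
        simp
    | succ m ih =>
        have hv : G.Reachable c v := edist_ne_top_iff_reachable.mp (by rw [hk]; exact ENat.coe_ne_top _)
        have hne : v ≠ c := by
          rintro rfl
          rw [edist_eq_zero_iff.mpr rfl] at hk
          exact absurd hk.symm (by exact_mod_cast Nat.succ_ne_zero m)
        obtain ⟨hadj, hdist⟩ := hpar v ⟨hv, hne⟩
        have hm : G.edist c (par v) = (m : ℕ∞) := by
          have : G.edist c (par v) + 1 = (m : ℕ∞) + 1 := by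
            rw [hdist, hk]; push_cast; ring
          exact WithTop.add_right_cancel ENat.one_ne_top this
        have hHadj : H.Adj v (par v) := by
          have : s(v, par v) ∈ H.edgeSet := hT ⟨v, ⟨hv, hne⟩, rfl⟩
          exact this
        calc H.edist c v ≤ H.edist c (par v) + H.edist (par v) v := SimpleGraph.edist_triangle
          _ ≤ (m : ℕ∞) + 1 := by
              gcongr
              · exact ih (par v) hm
              · exact le_of_eq (edist_eq_one_iff_adj.mpr hHadj.symm)
          _ = ((m + 1 : ℕ) : ℕ∞) := by push_cast; ring


private lemma greedy_cluster {V : Type*} [Fintype V] [DecidableEq V] (G : SimpleGraph V)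
    [DecidableRel G.Adj] {s : ℕ} (hs : 1 ≤ s) (U : Finset V) :
    ∃ (C : Finset V) (U' : Finset V), U' ⊆ U ∧
      s * C.card + U'.card ≤ U.card ∧
      (∀ x : V, (G.neighborFinset x ∩ U').card < s) ∧
      (∀ v ∈ U, v ∉ U' → ∃ c ∈ C, G.Adj c v) := by
  induction U using Finset.strongInduction with
  | _ U ih =>
    by_cases h : ∃ w : V, s ≤ (G.neighborFinset w ∩ U).card
    · obtain ⟨w, hw⟩ := h
      have hne : (G.neighborFinset w ∩ U).Nonempty := by
        rw [← Finset.card_pos]; omega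
      have hss : U \ G.neighborFinset w ⊂ U := by
        obtain ⟨a, ha⟩ := hne
        rw [Finset.mem_inter] at ha
        refine (Finset.ssubset_iff_of_subset Finset.sdiff_subset).mpr ⟨a, ha.2, ?_⟩
        simp only [Finset.mem_sdiff, not_and, not_not]
        exact fun _ => ha.1
      obtain ⟨C', U', hsub, hcard, hsmall, hdom⟩ := ih _ hss
      refine ⟨insert w C', U', hsub.trans (Finset.sdiff_subset), ?_, hsmall, ?_⟩
      · have h1 : (U \ G.neighborFinset w).card + (U ∩ G.neighborFinset w).card = U.card :=
          Finset.card_sdiff_add_card_inter U (G.neighborFinset w)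
        have h2 : s ≤ (U ∩ G.neighborFinset w).card := by rwa [Finset.inter_comm] at hw
        have h3 : (insert w C').card ≤ C'.card + 1 := Finset.card_insert_le w C'
        calc s * (insert w C').card + U'.card ≤ s * (C'.card + 1) + U'.card := by
              have := Nat.mul_le_mul_left s h3; omega
          _ = (s * C'.card + U'.card) + s := by ring
          _ ≤ (U \ G.neighborFinset w).card + s := by omega
          _ ≤ U.card := by omega
      · intro v hvU hv
        by_cases hv2 : v ∈ U \ G.neighborFinset w
        · obtain ⟨c, hc, hadj⟩ := hdom v hv2 hv
          exact ⟨c, Finset.mem_insert_of_mem hc, hadj⟩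
        · have : v ∈ G.neighborFinset w := by
            simp only [Finset.mem_sdiff] at hv2
            tauto
          exact ⟨w, Finset.mem_insert_self w C', (G.mem_neighborFinset w v).mp this⟩
    · push_neg at h
      exact ⟨∅, U, Finset.Subset.refl U, by simp, h, fun v hv hv' => absurd hv hv'⟩

/-- Every finite simple unweighted undirected graph `G` on `n` vertices has an additive
`2`-spanner with at most `2 * n^(3/2)` edges: a spanning subgraph `H ≤ G` such that
`d_H(u,v) ≤ d_G(u,v) + 2` for every pair of vertices `u, v` that are connected in `G`. -/
theorem stmt_0 {V : Type*} [Fintype V] (G : SimpleGraph V) :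
    ∃ H : SimpleGraph V, H ≤ G ∧
      (H.edgeSet.ncard : ℝ) ≤ 2 * (Fintype.card V : ℝ) ^ ((3 : ℝ) / 2) ∧
      ∀ u v : V, G.Reachable u v → H.edist u v ≤ G.edist u v + 2 := by
  classical
  by_cases hV : IsEmpty V
  · refine ⟨⊥, bot_le, ?_, fun u v _ => (hV.false u).elim⟩
    have hc : Fintype.card V = 0 := Fintype.card_eq_zero
    simp [hc, Real.zero_rpow (by norm_num : (3:ℝ)/2 ≠ 0)]
  have : Nonempty V := not_isEmpty_iff.mp hV
  set n := Fintype.card V with hn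
  have hnpos : 0 < n := Fintype.card_pos
  set s := n.sqrt + 1 with hsdef
  obtain ⟨C, U', hsub, hcard, hsmall, hdom⟩ := greedy_cluster G (by omega : 1 ≤ s) Finset.univ
  choose T hT1 hT2 hT3 using exists_tree G
  set E : Set (Sym2 V) := {e | e ∈ G.edgeSet ∧ ∃ x ∈ U', x ∈ e} ∪ ⋃ c ∈ C, T c with hE
  have hEsub : E ⊆ G.edgeSet := by
    rintro e (⟨he, _⟩ | he)
    · exact he
    · simp only [Set.mem_iUnion] at he
      obtain ⟨c, _, hc⟩ := he
      exact hT1 c hc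
  have hHedge : (fromEdgeSet E).edgeSet ⊆ E := by
    rw [SimpleGraph.edgeSet_fromEdgeSet]; exact Set.diff_subset
  have hEH : E ⊆ (fromEdgeSet E).edgeSet := by
    intro e he
    rw [SimpleGraph.edgeSet_fromEdgeSet]
    exact ⟨he, G.not_isDiag_of_mem_edgeSet (hEsub he)⟩
  refine ⟨fromEdgeSet E, ?_, ?_, ?_⟩
  · intro a b hab
    rw [SimpleGraph.fromEdgeSet_adj] at hab
    exact G.mem_edgeSet.mp (hEsub hab.1)
  · -- counting
    have h1 : ({e | e ∈ G.edgeSet ∧ ∃ x ∈ U', x ∈ e} : Set (Sym2 V)).ncard ≤ n * n.sqrt := by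
      set F : Finset (V × V) :=
        Finset.univ.biUnion (fun x => {x} ×ˢ (G.neighborFinset x ∩ U')) with hF
      have hrep : ∀ e : Sym2 V, ∃ p : V × V, Sym2.mk p.1 p.2 = e := fun e =>
        Sym2.ind (fun a b => ⟨(a, b), rfl⟩) e
      choose rep hmk using hrep
      set f : Sym2 V → V × V :=
        fun e => if (rep e).2 ∈ U' then rep e else (rep e).swap with hfdef
      have hmkf : ∀ e : Sym2 V, Sym2.mk (f e).1 (f e).2 = e := by
        intro e
        simp only [hfdef]
        by_cases h : (rep e).2 ∈ U'
        · rw [if_pos h]; exact hmk e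
        · rw [if_neg h, Sym2.mk_prod_swap_eq]; exact hmk e
      have hmaps : ∀ e ∈ ({e | e ∈ G.edgeSet ∧ ∃ x ∈ U', x ∈ e} : Set (Sym2 V)),
          f e ∈ (↑F : Set (V × V)) := by
        rintro e ⟨he, x, hxU, hxe⟩
        have hadj : G.Adj (rep e).1 (rep e).2 := by
          rw [← SimpleGraph.mem_edgeSet]
          have h' : s((rep e).1, (rep e).2) = e := hmk e
          rw [h']; exact he
        rw [Finset.mem_coe, hF, Finset.mem_biUnion]
        simp only [hfdef]
        by_cases h : (rep e).2 ∈ U'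
        · rw [if_pos h]
          refine ⟨(rep e).1, Finset.mem_univ _, ?_⟩
          rw [Finset.mem_product]
          exact ⟨Finset.mem_singleton_self _, Finset.mem_inter.mpr
            ⟨(G.mem_neighborFinset _ _).mpr hadj, h⟩⟩
        · rw [if_neg h]
          have hx1 : x = (rep e).1 := by
            rw [← hmk e, Sym2.mem_iff] at hxe
            rcases hxe with h1 | h2
            · exact h1
            · exact absurd (h2 ▸ hxU) h
          refine ⟨(rep e).2, Finset.mem_univ _, ?_⟩
          rw [Finset.mem_product]
          exact ⟨Finset.mem_singleton_self _, Finset.mem_inter.mpr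
            ⟨(G.mem_neighborFinset _ _).mpr hadj.symm, (show (rep e).1 ∈ U' from hx1 ▸ hxU)⟩⟩
      have hinj : Set.InjOn f {e | e ∈ G.edgeSet ∧ ∃ x ∈ U', x ∈ e} := by
        intro e1 _ e2 _ hfe
        rw [← hmkf e1, ← hmkf e2, hfe]
      have hle := Set.ncard_le_ncard_of_injOn f hmaps hinj (Set.toFinite _)
      rw [Set.ncard_coe_finset] at hle
      refine hle.trans ?_
      calc F.card ≤ ∑ x : V, ({x} ×ˢ (G.neighborFinset x ∩ U')).card := Finset.card_biUnion_le
        _ = ∑ x : V, (G.neighborFinset x ∩ U').card := by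
            simp [Finset.card_product]
        _ ≤ ∑ _x : V, n.sqrt := by
            apply Finset.sum_le_sum
            intro x _
            have := hsmall x
            omega
        _ = n * n.sqrt := by simp [hn, Finset.sum_const, Finset.card_univ, mul_comm]
    have h2 : (⋃ c ∈ C, T c).ncard ≤ C.card * n := by
      have heq : (⋃ c ∈ C, T c) = ↑(C.biUnion (fun c => (Set.toFinite (T c)).toFinset)) := by
        ext e
        simp only [Set.mem_iUnion, Finset.coe_biUnion, Finset.mem_coe,
          Set.Finite.mem_toFinset, Set.mem_iUnion]
      rw [heq, Set.ncard_coe_finset]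
      calc (C.biUnion (fun c => (Set.toFinite (T c)).toFinset)).card
          ≤ ∑ c ∈ C, ((Set.toFinite (T c)).toFinset).card := Finset.card_biUnion_le
        _ ≤ ∑ _c ∈ C, n := by
            apply Finset.sum_le_sum
            intro c _
            rw [← Set.ncard_eq_toFinset_card (T c)]
            exact hT2 c
        _ = C.card * n := by simp [Finset.sum_const, mul_comm]
    have hcount : (fromEdgeSet E).edgeSet.ncard ≤ n * n.sqrt + C.card * n := by
      calc (fromEdgeSet E).edgeSet.ncard ≤ E.ncard := Set.ncard_le_ncard hHedge (Set.toFinite _)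
        _ ≤ ({e | e ∈ G.edgeSet ∧ ∃ x ∈ U', x ∈ e} : Set (Sym2 V)).ncard
            + (⋃ c ∈ C, T c).ncard := Set.ncard_union_le _ _
        _ ≤ n * n.sqrt + C.card * n := Nat.add_le_add h1 h2
    -- real arithmetic
    have hNpos : (0:ℝ) < (n:ℝ) := by exact_mod_cast hnpos
    have hq1 : ((n.sqrt : ℕ) : ℝ) ≤ Real.sqrt (n:ℝ) := by
      rw [show ((n.sqrt : ℕ) : ℝ) = Real.sqrt (((n.sqrt : ℕ) : ℝ) ^ 2) from
        (Real.sqrt_sq (by positivity)).symm]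
      apply Real.sqrt_le_sqrt
      exact_mod_cast Nat.sqrt_le' n
    have hq2 : Real.sqrt (n:ℝ) ≤ ((n.sqrt : ℕ) : ℝ) + 1 := by
      rw [show ((n.sqrt : ℕ) : ℝ) + 1 = Real.sqrt ((((n.sqrt : ℕ) : ℝ) + 1) ^ 2) from
        (Real.sqrt_sq (by positivity)).symm]
      apply Real.sqrt_le_sqrt
      exact_mod_cast Nat.le_of_lt (Nat.lt_succ_sqrt' n)
    have hsC : s * C.card ≤ n := by
      rw [Finset.card_univ] at hcard
      omega
    have hks : (C.card : ℝ) * (((n.sqrt : ℕ) : ℝ) + 1) ≤ (n:ℝ) := by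
      have h' : ((s * C.card : ℕ) : ℝ) ≤ (n : ℝ) := Nat.cast_le.mpr hsC
      push_cast [hsdef] at h'
      nlinarith [h']
    have hk2 : (C.card : ℝ) ≤ Real.sqrt (n:ℝ) := by
      nlinarith [Real.sq_sqrt hNpos.le, Real.sqrt_nonneg (n:ℝ), hq2, hks,
        (by positivity : (0:ℝ) ≤ (C.card : ℝ))]
    have hrpow : (n:ℝ) ^ ((3:ℝ)/2) = (n:ℝ) * Real.sqrt (n:ℝ) := by
      rw [Real.sqrt_eq_rpow, show (3:ℝ)/2 = 1 + 1/2 by norm_num, Real.rpow_add hNpos,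
        Real.rpow_one]
    have hfinal : ((fromEdgeSet E).edgeSet.ncard : ℝ) ≤ (n * n.sqrt + C.card * n : ℕ) := by
      exact_mod_cast hcount
    rw [show (Fintype.card V : ℝ) = (n:ℝ) from rfl, hrpow]
    refine hfinal.trans ?_
    push_cast
    have t1 : (n : ℝ) * ((n.sqrt : ℕ) : ℝ) ≤ (n:ℝ) * Real.sqrt (n:ℝ) :=
      mul_le_mul_of_nonneg_left hq1 (by positivity)
    have t2 : (C.card : ℝ) * (n : ℝ) ≤ Real.sqrt (n:ℝ) * (n:ℝ) :=
      mul_le_mul_of_nonneg_right hk2 (by positivity)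
    nlinarith [t1, t2]
  · -- distances
    intro u v hr
    obtain ⟨p, hp⟩ := hr.exists_walk_length_eq_edist
    by_cases hall : ∀ x ∈ p.support, x ∈ U'
    · have hpe : ∀ e ∈ p.edges, e ∈ (fromEdgeSet E).edgeSet := by
        intro e
        induction e using Sym2.ind with
        | _ a b =>
          intro he
          apply hEH
          exact Or.inl ⟨p.edges_subset_edgeSet he,
            ⟨a, hall a (p.fst_mem_support_of_mem_edges he), Sym2.mem_mk_left a b⟩⟩
      calc (fromEdgeSet E).edist u v ≤ ((p.transfer _ hpe).length : ℕ∞) :=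
            SimpleGraph.edist_le _
        _ = (p.length : ℕ∞) := by rw [SimpleGraph.Walk.length_transfer]
        _ = G.edist u v := hp
        _ ≤ G.edist u v + 2 := le_self_add
    · push_neg at hall
      obtain ⟨x, hxs, hxU⟩ := hall
      obtain ⟨c, hcC, hadj⟩ := hdom x (Finset.mem_univ x) hxU
      have hTH : T c ⊆ (fromEdgeSet E).edgeSet :=
        fun e he => hEH (Or.inr (Set.mem_biUnion hcC he))
      have hrux : G.Reachable u x := ⟨p.takeUntil x hxs⟩
      have hrxv : G.Reachable x v := ⟨p.dropUntil x hxs⟩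
      have hrcu : G.Reachable c u := hadj.reachable.trans hrux.symm
      have hrcv : G.Reachable c v := hadj.reachable.trans hrxv
      have hlen : (p.takeUntil x hxs).length + (p.dropUntil x hxs).length = p.length := by
        have := congrArg SimpleGraph.Walk.length (p.take_spec hxs)
        rwa [SimpleGraph.Walk.length_append] at this
      have hcx : G.edist c x ≤ 1 := le_of_eq (edist_eq_one_iff_adj.mpr hadj)
      have hcu : G.edist c u ≤ 1 + ((p.takeUntil x hxs).length : ℕ∞) := by
        calc G.edist c u ≤ G.edist c x + G.edist x u := SimpleGraph.edist_triangle
          _ ≤ 1 + ((p.takeUntil x hxs).length : ℕ∞) := by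
              gcongr
              rw [SimpleGraph.edist_comm]
              exact SimpleGraph.edist_le _
      have hcv : G.edist c v ≤ 1 + ((p.dropUntil x hxs).length : ℕ∞) := by
        calc G.edist c v ≤ G.edist c x + G.edist x v := SimpleGraph.edist_triangle
          _ ≤ 1 + ((p.dropUntil x hxs).length : ℕ∞) := by
              gcongr
              exact SimpleGraph.edist_le _
      calc (fromEdgeSet E).edist u v
          ≤ (fromEdgeSet E).edist u c + (fromEdgeSet E).edist c v := SimpleGraph.edist_triangle
        _ ≤ G.edist c u + G.edist c v := by
            have e1 : (fromEdgeSet E).edist u c ≤ G.edist c u := by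
              rw [SimpleGraph.edist_comm]
              exact hT3 c (fromEdgeSet E) hTH u hrcu
            have e2 : (fromEdgeSet E).edist c v ≤ G.edist c v :=
              hT3 c (fromEdgeSet E) hTH v hrcv
            exact add_le_add e1 e2
        _ ≤ (1 + ((p.takeUntil x hxs).length : ℕ∞)) + (1 + ((p.dropUntil x hxs).length : ℕ∞)) :=
            by gcongr
        _ = (((p.takeUntil x hxs).length + (p.dropUntil x hxs).length : ℕ) : ℕ∞) + 2 := by
            push_cast; ring
        _ = (p.length : ℕ∞) + 2 := by rw [hlen]
        _ = G.edist u v + 2 := by rw [hp]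
end

section
/- Every finite simple unweighted undirected graph G on n vertices has an additive 8-spanner with at most 26·n^{4/3} + n edges. -/
open SimpleGraph

namespace AddSpanner

open scoped Classical

variable {V : Type*}

lemma adj_edist_le_one {G : SimpleGraph V} {u v : V} (h : G.Adj u v) : G.edist u v ≤ 1 := by
  simpa using G.edist_le h.toWalk

lemma edist_le_chain {G : SimpleGraph V} (H : SimpleGraph V) {u v : V} (w : G.Walk u v)
    {i j : ℕ} (hij : i ≤ j)
    (h : ∀ k, i ≤ k → k < j → H.Adj (w.getVert k) (w.getVert (k + 1))) :
    H.edist (w.getVert i) (w.getVert j) ≤ ((j - i : ℕ) : ℕ∞) := by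
  induction j, hij using Nat.le_induction with
  | base => simp [SimpleGraph.edist_self]
  | succ j hij ih =>
      have h1 : H.edist (w.getVert i) (w.getVert j) ≤ ((j - i : ℕ) : ℕ∞) :=
        ih (fun k hk hk' => h k hk (by omega))
      have h2 : H.edist (w.getVert j) (w.getVert (j + 1)) ≤ 1 :=
        adj_edist_le_one (h j hij (by omega))
      have h3 : H.edist (w.getVert i) (w.getVert (j + 1)) ≤
          H.edist (w.getVert i) (w.getVert j) + H.edist (w.getVert j) (w.getVert (j + 1)) :=
        SimpleGraph.edist_triangle
      have h4 : ((j + 1 - i : ℕ) : ℕ∞) = ((j - i : ℕ) : ℕ∞) + 1 := by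
        have : j + 1 - i = (j - i) + 1 := by omega
        rw [this]; push_cast; ring
      rw [h4]
      exact h3.trans (add_le_add h1 h2)

lemma edge_getVert_mem {G : SimpleGraph V} {u v : V} (w : G.Walk u v) {k : ℕ}
    (hk : k < w.length) : s(w.getVert k, w.getVert (k + 1)) ∈ w.edges := by
  induction w generalizing k with
  | nil => simp at hk
  | @cons a b c h p ih =>
      cases k with
      | zero =>
          have h1 : (Walk.cons h p).getVert 1 = b := (Walk.getVert_cons_succ (n := 0) p h).trans p.getVert_zero
          have h0 : (Walk.cons h p).getVert 0 = a := Walk.getVert_zero _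
          rw [h0, h1]
          simp [Walk.edges_cons]
      | succ k =>
          have hk' : k < p.length := by simpa [Walk.length_cons] using hk
          have := ih hk'
          rw [Walk.getVert_cons_succ, Walk.getVert_cons_succ]
          simp [Walk.edges_cons, this]

lemma mem_edges_index {G : SimpleGraph V} {u v : V} (w : G.Walk u v) {e : Sym2 V}
    (he : e ∈ w.edges) : ∃ k, k < w.length ∧ e = s(w.getVert k, w.getVert (k + 1)) := by
  induction w with
  | nil => simp at he
  | @cons a b c h p ih =>
      rw [Walk.edges_cons, List.mem_cons] at he
      rcases he with he | he
      · refine ⟨0, by simp [Walk.length_cons], ?_⟩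
        have h1 : (Walk.cons h p).getVert 1 = b := (Walk.getVert_cons_succ (n := 0) p h).trans p.getVert_zero
        have h0 : (Walk.cons h p).getVert 0 = a := Walk.getVert_zero _
        rw [h0, h1, he]
      · obtain ⟨k, hk, hke⟩ := ih he
        refine ⟨k + 1, by simp [Walk.length_cons]; omega, ?_⟩
        rw [Walk.getVert_cons_succ, Walk.getVert_cons_succ]
        exact hke

lemma edist_getVert_exact {G : SimpleGraph V} {u v : V} (w : G.Walk u v)
    (hw : (w.length : ℕ∞) = G.edist u v) {i j : ℕ} (hij : i ≤ j) (hj : j ≤ w.length) :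
    G.edist (w.getVert i) (w.getVert j) = ((j - i : ℕ) : ℕ∞) := by
  have hub : G.edist (w.getVert i) (w.getVert j) ≤ ((j - i : ℕ) : ℕ∞) :=
    edist_le_chain G w hij (fun k _ hk' => w.adj_getVert_succ (by omega))
  refine le_antisymm hub ?_
  have h1 : G.edist u (w.getVert i) ≤ (i : ℕ∞) := by
    have := edist_le_chain G w (Nat.zero_le i) (fun k _ hk' => w.adj_getVert_succ (by omega))
    simpa [w.getVert_zero] using this
  have h2 : G.edist (w.getVert j) v ≤ ((w.length - j : ℕ) : ℕ∞) := by
    have := edist_le_chain G w (i := j) (j := w.length) hj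
      (fun k _ hk' => w.adj_getVert_succ (by omega))
    simpa [w.getVert_length] using this
  obtain ⟨e, he⟩ : ∃ e : ℕ, G.edist (w.getVert i) (w.getVert j) = (e : ℕ∞) := by
    have hne : G.edist (w.getVert i) (w.getVert j) ≠ ⊤ :=
      ne_top_of_le_ne_top (by simp) hub
    lift G.edist (w.getVert i) (w.getVert j) to ℕ using hne with e
    exact ⟨e, rfl⟩
  have htri : G.edist u v ≤ G.edist u (w.getVert i) + G.edist (w.getVert i) (w.getVert j) +
      G.edist (w.getVert j) v :=
    le_trans SimpleGraph.edist_triangle (add_le_add_left SimpleGraph.edist_triangle _)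
  have hcast : (w.length : ℕ∞) ≤ ((i + e + (w.length - j) : ℕ) : ℕ∞) := by
    rw [hw]
    push_cast
    exact htri.trans (by exact add_le_add (add_le_add h1 he.le) h2)
  have hnat : w.length ≤ i + e + (w.length - j) := by exact_mod_cast hcast
  have : j - i ≤ e := by omega
  rw [he]
  exact_mod_cast this


def clustered (F : Finset (V × Finset V)) : Set V := {x | ∃ p ∈ F, x ∈ p.2}

def starP (F : Finset (V × Finset V)) (u v : V) : Prop :=
  (∃ p ∈ F, u = p.1 ∧ v ∈ p.2) ∨ (∃ p ∈ F, v = p.1 ∧ u ∈ p.2)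

lemma starP_symm {F : Finset (V × Finset V)} {u v : V} (h : starP F u v) : starP F v u :=
  h.elim Or.inr Or.inl

def base (G : SimpleGraph V) (F : Finset (V × Finset V)) : SimpleGraph V where
  Adj u v := G.Adj u v ∧ (u ∉ clustered F ∨ v ∉ clustered F ∨ starP F u v)
  symm := by
    constructor
    intro u v h
    exact ⟨h.1.symm, by rcases h.2 with h2 | h2 | h2
                        · exact Or.inr (Or.inl h2)
                        · exact Or.inl h2
                        · exact Or.inr (Or.inr (starP_symm h2))⟩
  loopless := ⟨fun v h => G.loopless.irrefl v h.1⟩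

lemma base_le (G : SimpleGraph V) (F : Finset (V × Finset V)) : base G F ≤ G :=
  fun _ _ h => h.1

def Valid (G : SimpleGraph V) (t : ℕ) (F : Finset (V × Finset V)) : Prop :=
  (∀ p ∈ F, p.2.card = t ∧ ∀ x ∈ p.2, G.Adj p.1 x) ∧
    (∀ p ∈ F, ∀ q ∈ F, p ≠ q → Disjoint p.2 q.2)

lemma star_adj_base {G : SimpleGraph V} {F : Finset (V × Finset V)} {t : ℕ}
    (hF : Valid G t F) {p : V × Finset V} (hp : p ∈ F) {x : V} (hx : x ∈ p.2) :
    (base G F).Adj p.1 x :=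
  ⟨(hF.1 p hp).2 x hx, Or.inr (Or.inr (Or.inl ⟨p, hp, rfl, hx⟩))⟩

lemma clustered_of_missing {G H : SimpleGraph V} {F : Finset (V × Finset V)}
    (hbase : base G F ≤ H) {u v : V} (hadj : G.Adj u v) (hmiss : ¬ H.Adj u v) :
    u ∈ clustered F ∧ v ∈ clustered F := by
  by_contra hc
  push_neg at hc
  apply hmiss
  by_cases hu : u ∈ clustered F
  · exact hbase ⟨hadj, Or.inr (Or.inl (hc hu))⟩
  · exact hbase ⟨hadj, Or.inl hu⟩

lemma exists_max_family [Fintype V] (G : SimpleGraph V) (t : ℕ) (ht : 1 ≤ t) :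
    ∃ F : Finset (V × Finset V), Valid G t F ∧
      ∀ v : V, ((G.neighborFinset v).filter (fun z => z ∉ clustered F)).card < t := by
  obtain ⟨F, hFv, hFmax⟩ := Set.Finite.exists_maximalFor (fun F : Finset (V × Finset V) => F.card)
    {F | Valid G t F} (Set.toFinite _) ⟨∅, by constructor <;> simp⟩
  refine ⟨F, hFv, fun v => ?_⟩
  by_contra hge
  push_neg at hge
  obtain ⟨T, hTsub, hTcard⟩ := Finset.exists_subset_card_eq hge
  have hTadj : ∀ x ∈ T, G.Adj v x := by
    intro x hx
    have := hTsub hx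
    simp only [Finset.mem_filter, mem_neighborFinset] at this
    exact this.1
  have hTun : ∀ x ∈ T, x ∉ clustered F := by
    intro x hx
    have := hTsub hx
    simp only [Finset.mem_filter] at this
    exact this.2
  have hnotmem : (v, T) ∉ F := by
    intro hmem
    obtain ⟨x, hx⟩ : T.Nonempty := Finset.card_pos.mp (by omega)
    exact hTun x hx ⟨(v, T), hmem, hx⟩
  have hvalid : Valid G t (insert (v, T) F) := by
    constructor
    · intro p hp
      rcases Finset.mem_insert.mp hp with rfl | hp
      · exact ⟨hTcard, hTadj⟩
      · exact hFv.1 p hp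
    · intro p hp q hq hpq
      rcases Finset.mem_insert.mp hp with rfl | hp'
      · rcases Finset.mem_insert.mp hq with rfl | hq'
        · exact absurd rfl hpq
        · exact Finset.disjoint_left.mpr fun x hx hx2 => hTun x hx ⟨q, hq', hx2⟩
      · rcases Finset.mem_insert.mp hq with rfl | hq'
        · exact Finset.disjoint_left.mpr fun x hx hx2 => hTun x hx2 ⟨p, hp', hx⟩
        · exact hFv.2 p hp' q hq' hpq
  have hcard : F.card < (insert (v, T) F).card := by
    rw [Finset.card_insert_of_notMem hnotmem]; omega
  have : (insert (v, T) F).card ≤ F.card := hFmax hvalid (le_of_lt hcard)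
  omega

/-! ### Potential -/

noncomputable def phi (G H : SimpleGraph V) (x y : V) : ℕ :=
  (min (H.edist x y) (G.edist x y + 3) - G.edist x y).toNat

noncomputable def psi (G : SimpleGraph V) (F : Finset (V × Finset V)) (H : SimpleGraph V) : ℕ :=
  ∑ p ∈ F ×ˢ F, phi G H p.1.1 p.2.1

lemma top_add_three : (⊤ : ℕ∞) + 3 = ⊤ := by simp

lemma phi_top {G H : SimpleGraph V} {x y : V} (hd : G.edist x y = ⊤) : phi G H x y = 0 := by
  unfold phi
  rw [hd, ENat.sub_top]
  rfl

lemma phi_le_three (G H : SimpleGraph V) (x y : V) : phi G H x y ≤ 3 := by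
  rcases eq_or_ne (G.edist x y) ⊤ with hd | hd
  · rw [phi_top hd]; omega
  · unfold phi
    lift G.edist x y to ℕ using hd with d
    have h1 : min (H.edist x y) ((d : ℕ∞) + 3) - (d : ℕ∞) ≤ ((d : ℕ∞) + 3) - (d : ℕ∞) :=
      tsub_le_tsub_right (min_le_right _ _) _
    have h2 : ((d : ℕ∞) + 3) - (d : ℕ∞) = ((3:ℕ) : ℕ∞) := by
      rw [show ((d : ℕ∞) + 3) = ((d + 3 : ℕ) : ℕ∞) by push_cast; ring,
        ← ENat.coe_sub]
      norm_cast
      omega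
    exact ENat.toNat_le_of_le_coe (by rw [h2] at h1; exact h1)

lemma phi_anti {G H H' : SimpleGraph V} (hH'G : H' ≤ G) (hHH' : H ≤ H') (x y : V) :
    phi G H' x y ≤ phi G H x y := by
  rcases eq_or_ne (G.edist x y) ⊤ with hd | hd
  · rw [phi_top hd, phi_top hd]
  · unfold phi
    lift G.edist x y to ℕ using hd with d
    have hfin : ((d:ℕ∞) + 3) ≠ ⊤ := by
      rw [show ((d : ℕ∞) + 3) = ((d + 3 : ℕ) : ℕ∞) by push_cast; ring]
      exact ENat.coe_ne_top _
    have hmin : min (H'.edist x y) ((d:ℕ∞) + 3) ≤ min (H.edist x y) ((d:ℕ∞) + 3) :=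
      min_le_min (edist_anti hHH') le_rfl
    rw [ENat.toNat_sub (by simp) _, ENat.toNat_sub (by simp) _]
    apply Nat.sub_le_sub_right
    apply ENat.toNat_le_toNat hmin
    exact ne_top_of_le_ne_top hfin (min_le_right _ _)

lemma phi_drop {G H HP H' : SimpleGraph V} {x y : V} (hH'G : H' ≤ G)
    (hcnd : HP.edist x y < min (H.edist x y) (G.edist x y + 3))
    (hH' : H'.edist x y ≤ HP.edist x y) :
    phi G H' x y + 1 ≤ phi G H x y := by
  rcases eq_or_ne (G.edist x y) ⊤ with hd | hd
  · exfalso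
    have h1 : H'.edist x y = ⊤ := top_le_iff.mp (hd ▸ edist_anti hH'G)
    have h2 : HP.edist x y = ⊤ := top_le_iff.mp (h1 ▸ hH')
    rw [h2] at hcnd
    exact not_top_lt hcnd
  · have hge := edist_anti (u := x) (v := y) hH'G
    unfold phi
    lift G.edist x y to ℕ using hd with d
    have hfin : ((d:ℕ∞) + 3) ≠ ⊤ := by
      rw [show ((d : ℕ∞) + 3) = ((d + 3 : ℕ) : ℕ∞) by push_cast; ring]
      exact ENat.coe_ne_top _
    have hklt : min (H'.edist x y) ((d:ℕ∞)+3) < min (H.edist x y) ((d:ℕ∞)+3) :=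
      lt_of_le_of_lt (le_trans (min_le_left _ _) hH') hcnd
    have hdle : (d:ℕ∞) ≤ min (H'.edist x y) ((d:ℕ∞)+3) := le_min hge le_self_add
    have hm : min (H.edist x y) ((d:ℕ∞) + 3) ≠ ⊤ :=
      ne_top_of_le_ne_top hfin (min_le_right _ _)
    lift min (H.edist x y) ((d:ℕ∞) + 3) to ℕ using hm with m hmeq
    have hm' : min (H'.edist x y) ((d:ℕ∞) + 3) ≠ ⊤ := LT.lt.ne_top hklt
    lift min (H'.edist x y) ((d:ℕ∞) + 3) to ℕ using hm' with m' hmeq'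
    have hlt' : m' < m := by exact_mod_cast hklt
    have hdm'' : d ≤ m' := by exact_mod_cast hdle
    rw [ENat.toNat_sub (by simp) _, ENat.toNat_sub (by simp) _]
    simp only [ENat.toNat_coe]
    omega


/-! ### The buying step -/

noncomputable def swalk (G : SimpleGraph V) {c c' : V} (h : G.Reachable c c') : G.Walk c c' :=
  (h.exists_walk_length_eq_edist).choose

lemma swalk_length (G : SimpleGraph V) {c c' : V} (h : G.Reachable c c') :
    ((swalk G h).length : ℕ∞) = G.edist c c' :=
  (h.exists_walk_length_eq_edist).choose_spec

def wG (G : SimpleGraph V) {c c' : V} (w : G.Walk c c') : SimpleGraph V :=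
  SimpleGraph.fromEdgeSet {e | e ∈ w.edges}

lemma wG_le {G : SimpleGraph V} {c c' : V} (w : G.Walk c c') : wG G w ≤ G := by
  intro u v h
  rw [wG, fromEdgeSet_adj] at h
  exact w.adj_of_mem_edges h.1

lemma wG_adj_of {G : SimpleGraph V} {c c' : V} (w : G.Walk c c') {k : ℕ} (hk : k < w.length) :
    (wG G w).Adj (w.getVert k) (w.getVert (k + 1)) := by
  rw [wG, fromEdgeSet_adj]
  exact ⟨edge_getVert_mem w hk, (w.adj_getVert_succ hk).ne⟩

noncomputable def miss {G : SimpleGraph V} (H : SimpleGraph V) {c c' : V} (w : G.Walk c c') :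
    Finset ℕ :=
  (Finset.range w.length).filter (fun i => ¬ H.Adj (w.getVert i) (w.getVert (i + 1)))

lemma mem_miss_iff {G H : SimpleGraph V} {c c' : V} {w : G.Walk c c'} {i : ℕ} :
    i ∈ miss H w ↔ i < w.length ∧ ¬ H.Adj (w.getVert i) (w.getVert (i + 1)) := by
  unfold miss
  rw [Finset.mem_filter, Finset.mem_range]

def cnd (G H HP : SimpleGraph V) (x y : V) : Prop :=
  HP.edist x y < min (H.edist x y) (G.edist x y + 3)

noncomputable def value (G : SimpleGraph V) (F : Finset (V × Finset V)) (H HP : SimpleGraph V)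
    (a b : V) : ℕ :=
  (F.filter (fun D => cnd G H HP D.1 a)).card + (F.filter (fun D => cnd G H HP D.1 b)).card

noncomputable def step (G : SimpleGraph V) (F : Finset (V × Finset V))
    (H : SimpleGraph V) (pr : (V × Finset V) × (V × Finset V)) : SimpleGraph V :=
  if h : G.Reachable pr.1.1 pr.2.1 then
    if (miss H (swalk G h)).card ≤
        4 * value G F H (H ⊔ wG G (swalk G h)) pr.1.1 pr.2.1
    then H ⊔ wG G (swalk G h) else H
  else H

lemma le_step (G : SimpleGraph V) (F : Finset (V × Finset V)) (H : SimpleGraph V)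
    (pr : (V × Finset V) × (V × Finset V)) : H ≤ step G F H pr := by
  unfold step
  split_ifs with h hc
  · exact le_sup_left
  · exact le_rfl
  · exact le_rfl

lemma step_le_G {G H : SimpleGraph V} (F : Finset (V × Finset V))
    (pr : (V × Finset V) × (V × Finset V)) (hHG : H ≤ G) : step G F H pr ≤ G := by
  unfold step
  split_ifs with h hc
  · exact sup_le hHG (wG_le _)
  · exact hHG
  · exact hHG

/-! ### The potential drop -/

lemma psi_drop {G H : SimpleGraph V} {F : Finset (V × Finset V)} {A B : V × Finset V}
    (hA : A ∈ F) (hB : B ∈ F) (hAB : A ≠ B) {H' : SimpleGraph V}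
    (hH'G : H' ≤ G) (hHH' : H ≤ H') :
    psi G F H' + value G F H H' A.1 B.1 ≤ psi G F H := by
  classical
  set SA := F.filter (fun D => cnd G H H' D.1 A.1) with hSA
  set SB := F.filter (fun D => cnd G H H' D.1 B.1) with hSB
  set S : Finset ((V × Finset V) × (V × Finset V)) :=
    SA.image (fun D => (D, A)) ∪ SB.image (fun D => (D, B)) with hS
  have hinjA : Function.Injective (fun D : V × Finset V => (D, A)) := by
    intro a b h; exact (Prod.ext_iff.mp h).1
  have hinjB : Function.Injective (fun D : V × Finset V => (D, B)) := by
    intro a b h; exact (Prod.ext_iff.mp h).1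
  have hdisj : Disjoint (SA.image (fun D => (D, A))) (SB.image (fun D => (D, B))) := by
    rw [Finset.disjoint_left]
    intro x hx hx'
    obtain ⟨a, _, rfl⟩ := Finset.mem_image.mp hx
    obtain ⟨b, _, hb⟩ := Finset.mem_image.mp hx'
    exact hAB ((Prod.ext_iff.mp hb).2).symm
  have hScard : S.card = value G F H H' A.1 B.1 := by
    rw [hS, Finset.card_union_of_disjoint hdisj, Finset.card_image_of_injective _ hinjA,
      Finset.card_image_of_injective _ hinjB, hSA, hSB]
    rfl
  have hSsub : S ⊆ F ×ˢ F := by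
    intro x hx
    rw [hS, Finset.mem_union] at hx
    rcases hx with hx | hx
    · obtain ⟨a, ha, rfl⟩ := Finset.mem_image.mp hx
      exact Finset.mem_product.mpr ⟨Finset.mem_of_mem_filter _ ha, hA⟩
    · obtain ⟨a, ha, rfl⟩ := Finset.mem_image.mp hx
      exact Finset.mem_product.mpr ⟨Finset.mem_of_mem_filter _ ha, hB⟩
  have key : ∑ p ∈ F ×ˢ F, (phi G H' p.1.1 p.2.1 + if p ∈ S then 1 else 0) ≤
      ∑ p ∈ F ×ˢ F, phi G H p.1.1 p.2.1 := by
    apply Finset.sum_le_sum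
    intro p hp
    by_cases hps : p ∈ S
    · rw [if_pos hps]
      rw [hS, Finset.mem_union] at hps
      rcases hps with hx | hx
      · obtain ⟨a, ha, rfl⟩ := Finset.mem_image.mp hx
        have hcnd := (Finset.mem_filter.mp (hSA ▸ ha)).2
        exact phi_drop hH'G hcnd le_rfl
      · obtain ⟨a, ha, rfl⟩ := Finset.mem_image.mp hx
        have hcnd := (Finset.mem_filter.mp (hSB ▸ ha)).2
        exact phi_drop hH'G hcnd le_rfl
    · rw [if_neg hps, add_zero]
      exact phi_anti hH'G hHH' _ _
  have hsum : ∑ p ∈ F ×ˢ F, (phi G H' p.1.1 p.2.1 + if p ∈ S then 1 else 0) =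
      psi G F H' + S.card := by
    rw [Finset.sum_add_distrib]
    congr 1
    rw [Finset.sum_ite_mem, Finset.inter_eq_right.mpr hSsub, Finset.sum_const, smul_eq_mul,
      mul_one]
  rw [← hScard, ← hsum]
  exact key

/-! ### The unbought case -/

lemma unbought {G H : SimpleGraph V} {F : Finset (V × Finset V)} {t : ℕ}
    (hF : Valid G t F) (hbase : base G F ≤ H) (hHG : H ≤ G) {c c' : V}
    (w : G.Walk c c') (hw : (w.length : ℕ∞) = G.edist c c')
    (hcost : ¬ (miss H w).card ≤ 4 * value G F H (H ⊔ wG G w) c c') :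
    H.edist c c' ≤ G.edist c c' + 2 := by
  classical
  set HP := H ⊔ wG G w with hHP
  set M := miss H w with hM
  have hHPG : HP ≤ G := sup_le hHG (wG_le _)
  have hclu : ∀ i ∈ M, ∃ p ∈ F, w.getVert i ∈ p.2 := by
    intro i hi
    have hi' := mem_miss_iff.mp hi
    exact (clustered_of_missing hbase (w.adj_getVert_succ hi'.1) hi'.2).1
  set g : ℕ → V × Finset V := fun i => if hi : i ∈ M then (hclu i hi).choose else (c, ∅)
    with hgdef
  have hg : ∀ i ∈ M, g i ∈ F ∧ w.getVert i ∈ (g i).2 := by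
    intro i hi
    rw [hgdef]
    simp only [dif_pos hi]
    exact ⟨(hclu i hi).choose_spec.1, (hclu i hi).choose_spec.2⟩
  set K := M.image g with hK
  have hilen : ∀ i ∈ M, i < w.length := fun i hi => (mem_miss_iff.mp hi).1
  have hfib : ∀ p ∈ K, (M.filter (fun i => g i = p)).card ≤ 3 := by
    intro p hp
    obtain ⟨iw, hiw, hgiw⟩ := Finset.mem_image.mp hp
    have hpF : p ∈ F := hgiw ▸ (hg iw hiw).1
    have hne : (M.filter (fun i => g i = p)).Nonempty :=
      ⟨iw, Finset.mem_filter.mpr ⟨hiw, hgiw⟩⟩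
    set fb := M.filter (fun i => g i = p) with hfb
    set i0 := fb.min' hne with hi0def
    have hi0 : i0 ∈ fb := Finset.min'_mem _ _
    have hsub : fb ⊆ Finset.Icc i0 (i0 + 2) := by
      intro i hi
      rw [Finset.mem_Icc]
      refine ⟨Finset.min'_le _ _ hi, ?_⟩
      have hiM : i ∈ M := Finset.mem_of_mem_filter _ hi
      have hi0M : i0 ∈ M := Finset.mem_of_mem_filter _ hi0
      have hx0 : w.getVert i0 ∈ p.2 := by
        have h2 := (hg i0 hi0M).2
        rwa [(Finset.mem_filter.mp hi0).2] at h2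
      have hx : w.getVert i ∈ p.2 := by
        have h2 := (hg i hiM).2
        rwa [(Finset.mem_filter.mp hi).2] at h2
      have hd2 : G.edist (w.getVert i0) (w.getVert i) ≤ 2 := by
        have ha0 : G.Adj p.1 (w.getVert i0) := (hF.1 p hpF).2 _ hx0
        have ha : G.Adj p.1 (w.getVert i) := (hF.1 p hpF).2 _ hx
        calc G.edist (w.getVert i0) (w.getVert i) ≤
            G.edist (w.getVert i0) p.1 + G.edist p.1 (w.getVert i) :=
              SimpleGraph.edist_triangle
          _ ≤ 1 + 1 := add_le_add
              (by rw [SimpleGraph.edist_comm]; exact adj_edist_le_one ha0)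
              (adj_edist_le_one ha)
          _ = 2 := by norm_num
      have hexact : G.edist (w.getVert i0) (w.getVert i) = ((i - i0 : ℕ) : ℕ∞) :=
        edist_getVert_exact w hw (Finset.min'_le _ _ hi) (le_of_lt (hilen i hiM))
      rw [hexact] at hd2
      have : i - i0 ≤ 2 := by exact_mod_cast hd2
      omega
    calc fb.card ≤ (Finset.Icc i0 (i0 + 2)).card := Finset.card_le_card hsub
      _ = 3 := by rw [Nat.card_Icc]; omega
  have hMK : M.card ≤ 3 * K.card :=
    Finset.card_le_mul_card_image_of_maps_to (fun i hi => Finset.mem_image_of_mem g hi) 3 hfib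
  have hex : ∃ p ∈ K, ¬ cnd G H HP p.1 c ∧ ¬ cnd G H HP p.1 c' := by
    by_contra hno
    push_neg at hno
    have hKsub : K ⊆ (F.filter fun D => cnd G H HP D.1 c) ∪
        (F.filter fun D => cnd G H HP D.1 c') := by
      intro p hp
      obtain ⟨iw, hiw, hgiw⟩ := Finset.mem_image.mp hp
      have hpF : p ∈ F := hgiw ▸ (hg iw hiw).1
      by_cases h1 : cnd G H HP p.1 c
      · exact Finset.mem_union_left _ (Finset.mem_filter.mpr ⟨hpF, h1⟩)
      · exact Finset.mem_union_right _ (Finset.mem_filter.mpr ⟨hpF, hno p hp h1⟩)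
    have hKval : K.card ≤ value G F H HP c c' := by
      calc K.card ≤ ((F.filter fun D => cnd G H HP D.1 c) ∪
          (F.filter fun D => cnd G H HP D.1 c')).card := Finset.card_le_card hKsub
        _ ≤ value G F H HP c c' := Finset.card_union_le _ _
    apply hcost
    calc M.card ≤ 3 * K.card := hMK
      _ ≤ 4 * value G F H HP c c' := by omega
  obtain ⟨p, hpK, hnc, hnc'⟩ := hex
  obtain ⟨i, hiM, hgi⟩ := Finset.mem_image.mp hpK
  have hpF : p ∈ F := hgi ▸ (hg i hiM).1
  have hxin : w.getVert i ∈ p.2 := hgi ▸ (hg i hiM).2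
  have hil : i < w.length := hilen i hiM
  have hadjpx : G.Adj p.1 (w.getVert i) := (hF.1 p hpF).2 _ hxin
  have hHadj : H.Adj p.1 (w.getVert i) := hbase (star_adj_base hF hpF hxin)
  have hHPc : HP.edist c (w.getVert i) ≤ (i : ℕ∞) := by
    have := edist_le_chain HP w (Nat.zero_le i)
      (fun k _ hk' => (sup_adj _ _ _ _).mpr (Or.inr (wG_adj_of w (by omega))))
    simpa [w.getVert_zero] using this
  have hHPc' : HP.edist (w.getVert i) c' ≤ ((w.length - i : ℕ) : ℕ∞) := by
    have := edist_le_chain HP w (le_of_lt hil)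
      (fun k _ hk' => (sup_adj _ _ _ _).mpr (Or.inr (wG_adj_of w (by omega))))
    simpa [w.getVert_length] using this
  have hHPp1 : HP.edist p.1 c ≤ (i : ℕ∞) + 1 := by
    calc HP.edist p.1 c ≤ HP.edist p.1 (w.getVert i) + HP.edist (w.getVert i) c :=
        SimpleGraph.edist_triangle
      _ ≤ 1 + (i : ℕ∞) := add_le_add
          (adj_edist_le_one (le_sup_left (a := H) (b := wG G w) hHadj))
          (by rw [SimpleGraph.edist_comm]; exact hHPc)
      _ = (i : ℕ∞) + 1 := by ring
  have hHPp2 : HP.edist p.1 c' ≤ ((w.length - i : ℕ) : ℕ∞) + 1 := by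
    calc HP.edist p.1 c' ≤ HP.edist p.1 (w.getVert i) + HP.edist (w.getVert i) c' :=
        SimpleGraph.edist_triangle
      _ ≤ 1 + ((w.length - i : ℕ) : ℕ∞) := add_le_add
          (adj_edist_le_one (le_sup_left (a := H) (b := wG G w) hHadj)) hHPc'
      _ = ((w.length - i : ℕ) : ℕ∞) + 1 := by ring
  have hex1 : G.edist c (w.getVert i) = (i : ℕ∞) := by
    have := edist_getVert_exact w hw (Nat.zero_le i) (le_of_lt hil)
    simpa [w.getVert_zero] using this
  have hex2 : G.edist (w.getVert i) c' = ((w.length - i : ℕ) : ℕ∞) := by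
    have := edist_getVert_exact w hw (le_of_lt hil) (le_refl w.length)
    simpa [w.getVert_length] using this
  have hlb1 : (i : ℕ∞) ≤ G.edist p.1 c + 1 := by
    rw [← hex1]
    calc G.edist c (w.getVert i) ≤ G.edist c p.1 + G.edist p.1 (w.getVert i) :=
        SimpleGraph.edist_triangle
      _ ≤ G.edist c p.1 + 1 := add_le_add_right (adj_edist_le_one hadjpx) _
      _ = G.edist p.1 c + 1 := by rw [SimpleGraph.edist_comm]
  have hlb2 : ((w.length - i : ℕ) : ℕ∞) ≤ G.edist p.1 c' + 1 := by
    rw [← hex2]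
    calc G.edist (w.getVert i) c' ≤ G.edist (w.getVert i) p.1 + G.edist p.1 c' :=
        SimpleGraph.edist_triangle
      _ ≤ 1 + G.edist p.1 c' := add_le_add_left
          (by rw [SimpleGraph.edist_comm]; exact adj_edist_le_one hadjpx) _
      _ = G.edist p.1 c' + 1 := by ring
  have hkey : ∀ (z : V), ¬ cnd G H HP p.1 z → HP.edist p.1 z ≤ G.edist p.1 z + 2 →
      G.edist p.1 z ≠ ⊤ → H.edist p.1 z ≤ HP.edist p.1 z := by
    intro z hncz hle hfin
    rw [cnd, not_lt] at hncz
    rcases min_cases (H.edist p.1 z) (G.edist p.1 z + 3) with ⟨heq, _⟩ | ⟨heq, hge⟩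
    · rw [heq] at hncz; exact hncz
    · exfalso
      rw [heq] at hncz
      have hlt : HP.edist p.1 z < G.edist p.1 z + 3 := by
        calc HP.edist p.1 z ≤ G.edist p.1 z + 2 := hle
          _ < G.edist p.1 z + 3 := WithTop.add_lt_add_left hfin (by decide)
      exact absurd hncz (not_le.mpr hlt)
  have hfin1 : G.edist p.1 c ≠ ⊤ := by
    intro htop
    have h1 : G.edist p.1 c ≤ (i : ℕ∞) + 1 := le_trans (edist_anti hHPG) hHPp1
    rw [htop, show ((i : ℕ∞) + 1) = ((i + 1 : ℕ) : ℕ∞) by push_cast; ring] at h1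
    exact ENat.coe_ne_top (i + 1) (top_le_iff.mp h1)
  have hfin2 : G.edist p.1 c' ≠ ⊤ := by
    intro htop
    have h1 : G.edist p.1 c' ≤ ((w.length - i : ℕ) : ℕ∞) + 1 :=
      le_trans (edist_anti hHPG) hHPp2
    rw [htop, show (((w.length - i : ℕ) : ℕ∞) + 1) = ((w.length - i + 1 : ℕ) : ℕ∞) by
      push_cast; ring] at h1
    exact ENat.coe_ne_top (w.length - i + 1) (top_le_iff.mp h1)
  have hHc : H.edist p.1 c ≤ (i : ℕ∞) + 1 := by
    refine le_trans (hkey c hnc ?_ hfin1) hHPp1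
    calc HP.edist p.1 c ≤ (i : ℕ∞) + 1 := hHPp1
      _ ≤ (G.edist p.1 c + 1) + 1 := add_le_add_left hlb1 _
      _ = G.edist p.1 c + 2 := by ring
  have hHc' : H.edist p.1 c' ≤ ((w.length - i : ℕ) : ℕ∞) + 1 := by
    refine le_trans (hkey c' hnc' ?_ hfin2) hHPp2
    calc HP.edist p.1 c' ≤ ((w.length - i : ℕ) : ℕ∞) + 1 := hHPp2
      _ ≤ (G.edist p.1 c' + 1) + 1 := add_le_add_left hlb2 _
      _ = G.edist p.1 c' + 2 := by ring
  calc H.edist c c' ≤ H.edist c p.1 + H.edist p.1 c' := SimpleGraph.edist_triangle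
    _ ≤ ((i : ℕ∞) + 1) + (((w.length - i : ℕ) : ℕ∞) + 1) := add_le_add
        (by rw [SimpleGraph.edist_comm]; exact hHc) hHc'
    _ = ((w.length + 2 : ℕ) : ℕ∞) := by
        rw [show ((i : ℕ∞) + 1) + (((w.length - i : ℕ) : ℕ∞) + 1) =
          ((i + 1 + (w.length - i + 1) : ℕ) : ℕ∞) by push_cast; ring]
        congr 1
        omega
    _ = G.edist c c' + 2 := by rw [← hw]; push_cast; ring


/-! ### Step lemmas -/

lemma step_guarantee {G H : SimpleGraph V} {F : Finset (V × Finset V)} {t : ℕ}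
    (hF : Valid G t F) (hbase : base G F ≤ H) (hHG : H ≤ G)
    (pr : (V × Finset V) × (V × Finset V)) :
    (step G F H pr).edist pr.1.1 pr.2.1 ≤ G.edist pr.1.1 pr.2.1 + 2 := by
  unfold step
  split_ifs with h hc
  · have h2 : (H ⊔ wG G (swalk G h)).edist pr.1.1 pr.2.1 ≤ ((swalk G h).length : ℕ∞) := by
      have := edist_le_chain (H ⊔ wG G (swalk G h)) (swalk G h)
        (Nat.zero_le ((swalk G h).length))
        (fun k _ hk' => (sup_adj _ _ _ _).mpr (Or.inr (wG_adj_of _ hk')))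
      simpa [Walk.getVert_zero, Walk.getVert_length] using this
    rw [swalk_length G h] at h2
    exact le_trans h2 le_self_add
  · exact unbought hF hbase hHG _ (swalk_length G h) hc
  · simp [edist_eq_top_of_not_reachable h]

lemma step_card [Fintype V] {G H : SimpleGraph V} {F : Finset (V × Finset V)}
    {pr : (V × Finset V) × (V × Finset V)} (hA : pr.1 ∈ F) (hB : pr.2 ∈ F)
    (hAB : pr.1 ≠ pr.2) (hHG : H ≤ G) :
    (step G F H pr).edgeSet.ncard + 4 * psi G F (step G F H pr) ≤
      H.edgeSet.ncard + 4 * psi G F H := by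
  unfold step
  split_ifs with h hc
  · set w := swalk G h with hw
    have hpsi : psi G F (H ⊔ wG G w) + value G F H (H ⊔ wG G w) pr.1.1 pr.2.1 ≤ psi G F H :=
      psi_drop hA hB hAB (sup_le hHG (wG_le _)) le_sup_left
    have hcard : (H ⊔ wG G w).edgeSet.ncard ≤ H.edgeSet.ncard + (miss H w).card := by
      have hsub : (H ⊔ wG G w).edgeSet ⊆ H.edgeSet ∪
          (((miss H w).image (fun i => s(w.getVert i, w.getVert (i + 1)))) : Finset (Sym2 V)) := by
        intro e he
        rw [edgeSet_sup] at he
        rcases he with he | he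
        · exact Set.mem_union_left _ he
        · rw [wG, edgeSet_fromEdgeSet] at he
          obtain ⟨hew, _⟩ := he
          obtain ⟨k, hk, rfl⟩ := mem_edges_index w hew
          by_cases hadj : H.Adj (w.getVert k) (w.getVert (k + 1))
          · exact Set.mem_union_left _ hadj
          · refine Set.mem_union_right _ ?_
            have hkm : k ∈ miss H w := mem_miss_iff.mpr ⟨hk, hadj⟩
            exact Finset.mem_coe.mpr (Finset.mem_image_of_mem _ hkm)
      calc (H ⊔ wG G w).edgeSet.ncard ≤ (H.edgeSet ∪
          (((miss H w).image (fun i => s(w.getVert i, w.getVert (i + 1)))) : Finset (Sym2 V))).ncard :=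
            Set.ncard_le_ncard hsub (Set.toFinite _)
        _ ≤ H.edgeSet.ncard +
            ((((miss H w).image (fun i => s(w.getVert i, w.getVert (i + 1)))) : Finset (Sym2 V)) : Set (Sym2 V)).ncard :=
            Set.ncard_union_le _ _
        _ ≤ H.edgeSet.ncard + (miss H w).card := by
            rw [Set.ncard_coe_finset]
            exact add_le_add_right (Finset.card_image_le) _
    omega
  · exact le_rfl
  · exact le_rfl

/-! ### Folding the buying steps -/

lemma foldl_inv [Fintype V] {G : SimpleGraph V} {F : Finset (V × Finset V)} {t : ℕ}
    (hF : Valid G t F) (L : List ((V × Finset V) × (V × Finset V)))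
    (hL : ∀ pr ∈ L, pr.1 ∈ F ∧ pr.2 ∈ F ∧ pr.1 ≠ pr.2)
    {H : SimpleGraph V} (hbase : base G F ≤ H) (hHG : H ≤ G) :
    H ≤ L.foldl (step G F) H ∧ L.foldl (step G F) H ≤ G ∧
      (L.foldl (step G F) H).edgeSet.ncard + 4 * psi G F (L.foldl (step G F) H) ≤
        H.edgeSet.ncard + 4 * psi G F H ∧
      ∀ pr ∈ L, (L.foldl (step G F) H).edist pr.1.1 pr.2.1 ≤ G.edist pr.1.1 pr.2.1 + 2 := by
  induction L generalizing H with
  | nil =>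
      refine ⟨le_rfl, hHG, le_rfl, ?_⟩
      intro pr hpr
      simp at hpr
  | cons pr L ih =>
      obtain ⟨h1, h2, h3⟩ := hL pr (List.mem_cons_self)
      have hH1 := le_step G F H pr
      have hH1G := step_le_G F pr hHG
      have hbase1 : base G F ≤ step G F H pr := le_trans hbase hH1
      obtain ⟨ha, hb, hcard, hguar⟩ :=
        ih (fun q hq => hL q (List.mem_cons_of_mem _ hq)) hbase1 hH1G
      rw [List.foldl_cons]
      refine ⟨le_trans hH1 ha, hb, le_trans hcard (step_card h1 h2 h3 hHG), ?_⟩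
      intro q hq
      rcases List.mem_cons.mp hq with rfl | hq'
      · exact le_trans (edist_anti ha) (step_guarantee hF hbase hHG q)
      · exact hguar q hq'

/-! ### The stretch bound -/

lemma stretch {G H : SimpleGraph V} {F : Finset (V × Finset V)} {t : ℕ}
    (hF : Valid G t F) (hbase : base G F ≤ H) (hHG : H ≤ G)
    (hg : ∀ A ∈ F, ∀ B ∈ F, H.edist A.1 B.1 ≤ G.edist A.1 B.1 + 2) :
    ∀ u v : V, G.Reachable u v → H.edist u v ≤ G.edist u v + 8 := by
  intro u v hr
  obtain ⟨w, hw⟩ := hr.exists_walk_length_eq_edist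
  rcases Finset.eq_empty_or_nonempty (miss H w) with hM | hne
  · have hchain : H.edist u v ≤ (w.length : ℕ∞) := by
      have := edist_le_chain H w (Nat.zero_le w.length) (fun k _ hk' => by
        by_contra hadj
        have : k ∈ miss H w := mem_miss_iff.mpr ⟨hk', hadj⟩
        simp [hM] at this)
      simpa [Walk.getVert_zero, Walk.getVert_length] using this
    rw [hw] at hchain
    exact le_trans hchain le_self_add
  · set i1 := (miss H w).min' hne with hi1
    set j1 := (miss H w).max' hne with hj1
    have hi1M : i1 ∈ miss H w := Finset.min'_mem _ _
    have hj1M : j1 ∈ miss H w := Finset.max'_mem _ _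
    have hij : i1 ≤ j1 := Finset.min'_le _ _ hj1M
    have hi1l : i1 < w.length := (mem_miss_iff.mp hi1M).1
    have hj1l : j1 < w.length := (mem_miss_iff.mp hj1M).1
    have hxcl : w.getVert i1 ∈ clustered F :=
      (clustered_of_missing hbase (w.adj_getVert_succ hi1l) (mem_miss_iff.mp hi1M).2).1
    have hycl : w.getVert (j1 + 1) ∈ clustered F :=
      (clustered_of_missing hbase (w.adj_getVert_succ hj1l) (mem_miss_iff.mp hj1M).2).2
    obtain ⟨A, hAF, hxA⟩ := hxcl
    obtain ⟨B, hBF, hyB⟩ := hycl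
    have hux : H.edist u (w.getVert i1) ≤ (i1 : ℕ∞) := by
      have := edist_le_chain H w (Nat.zero_le i1) (fun k _ hk' => by
        by_contra hadj
        have hkm : k ∈ miss H w := mem_miss_iff.mpr ⟨by omega, hadj⟩
        have := Finset.min'_le _ _ hkm
        omega)
      simpa [Walk.getVert_zero] using this
    have hyv : H.edist (w.getVert (j1 + 1)) v ≤ ((w.length - (j1 + 1) : ℕ) : ℕ∞) := by
      have := edist_le_chain H w (i := j1 + 1) (j := w.length) (by omega)
        (fun k hk hk' => by
          by_contra hadj
          have hkm : k ∈ miss H w := mem_miss_iff.mpr ⟨hk', hadj⟩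
          have := Finset.le_max' _ _ hkm
          omega)
      simpa [Walk.getVert_length] using this
    have hHxA : H.edist (w.getVert i1) A.1 ≤ 1 := by
      rw [SimpleGraph.edist_comm]
      exact adj_edist_le_one (hbase (star_adj_base hF hAF hxA))
    have hHBy : H.edist B.1 (w.getVert (j1 + 1)) ≤ 1 :=
      adj_edist_le_one (hbase (star_adj_base hF hBF hyB))
    have hGxy : G.edist (w.getVert i1) (w.getVert (j1 + 1)) ≤ ((j1 + 1 - i1 : ℕ) : ℕ∞) :=
      edist_le_chain G w (by omega) (fun k _ hk' => w.adj_getVert_succ (by omega))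
    have hGAB : G.edist A.1 B.1 ≤ ((j1 + 1 - i1 + 2 : ℕ) : ℕ∞) := by
      have t1 : G.edist A.1 B.1 ≤ G.edist A.1 (w.getVert i1) +
          G.edist (w.getVert i1) (w.getVert (j1 + 1)) + G.edist (w.getVert (j1 + 1)) B.1 :=
        le_trans SimpleGraph.edist_triangle (add_le_add_left SimpleGraph.edist_triangle _)
      have e1 : G.edist A.1 (w.getVert i1) ≤ 1 := adj_edist_le_one ((hF.1 A hAF).2 _ hxA)
      have e2 : G.edist (w.getVert (j1 + 1)) B.1 ≤ 1 := by
        rw [SimpleGraph.edist_comm]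
        exact adj_edist_le_one ((hF.1 B hBF).2 _ hyB)
      calc G.edist A.1 B.1 ≤ 1 + ((j1 + 1 - i1 : ℕ) : ℕ∞) + 1 :=
          le_trans t1 (add_le_add (add_le_add e1 hGxy) e2)
        _ = ((j1 + 1 - i1 + 2 : ℕ) : ℕ∞) := by push_cast; ring
    have hHAB : H.edist A.1 B.1 ≤ ((j1 + 1 - i1 + 2 : ℕ) : ℕ∞) + 2 :=
      le_trans (hg A hAF B hBF) (add_le_add_left hGAB _)
    have t1 : H.edist u v ≤ H.edist u (w.getVert i1) + H.edist (w.getVert i1) v :=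
      SimpleGraph.edist_triangle
    have t2 : H.edist (w.getVert i1) v ≤ H.edist (w.getVert i1) A.1 + H.edist A.1 v :=
      SimpleGraph.edist_triangle
    have t3 : H.edist A.1 v ≤ H.edist A.1 B.1 + H.edist B.1 v :=
      SimpleGraph.edist_triangle
    have t4 : H.edist B.1 v ≤ H.edist B.1 (w.getVert (j1 + 1)) +
        H.edist (w.getVert (j1 + 1)) v := SimpleGraph.edist_triangle
    have htot : H.edist u v ≤ (i1 : ℕ∞) + (1 + ((((j1 + 1 - i1 + 2 : ℕ) : ℕ∞) + 2) +
        (1 + ((w.length - (j1 + 1) : ℕ) : ℕ∞)))) := by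
      refine le_trans t1 (add_le_add hux ?_)
      refine le_trans t2 (add_le_add hHxA ?_)
      refine le_trans t3 (add_le_add hHAB ?_)
      exact le_trans t4 (add_le_add hHBy hyv)
    have heq : (i1 : ℕ∞) + (1 + ((((j1 + 1 - i1 + 2 : ℕ) : ℕ∞) + 2) +
        (1 + ((w.length - (j1 + 1) : ℕ) : ℕ∞)))) = ((w.length + 6 : ℕ) : ℕ∞) := by
      rw [show (i1 : ℕ∞) + (1 + ((((j1 + 1 - i1 + 2 : ℕ) : ℕ∞) + 2) +
          (1 + ((w.length - (j1 + 1) : ℕ) : ℕ∞)))) =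
        ((i1 + 1 + (j1 + 1 - i1 + 2) + 2 + 1 + (w.length - (j1 + 1)) : ℕ) : ℕ∞) by
          push_cast; ring]
      congr 1
      omega
    rw [heq] at htot
    calc H.edist u v ≤ ((w.length + 6 : ℕ) : ℕ∞) := htot
      _ = G.edist u v + 6 := by rw [← hw]; push_cast; ring
      _ ≤ G.edist u v + 8 := add_le_add_right (by norm_num) _


/-! ### Counting -/

lemma cluster_count [Fintype V] {G : SimpleGraph V} {t : ℕ} {F : Finset (V × Finset V)}
    (hF : Valid G t F) : F.card * t ≤ Fintype.card V := by
  classical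
  have hbu : ∑ p ∈ F, p.2.card = (F.biUnion (fun p => p.2)).card :=
    (Finset.card_biUnion (fun p hp q hq hpq => hF.2 p hp q hq hpq)).symm
  calc F.card * t = ∑ _p ∈ F, t := by rw [Finset.sum_const, smul_eq_mul]
    _ = ∑ p ∈ F, p.2.card := Finset.sum_congr rfl (fun p hp => ((hF.1 p hp).1).symm)
    _ = (F.biUnion (fun p => p.2)).card := hbu
    _ ≤ Fintype.card V := Finset.card_le_univ _

lemma psi_le (G : SimpleGraph V) (F : Finset (V × Finset V)) (H : SimpleGraph V) :
    psi G F H ≤ 3 * (F.card * F.card) := by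
  calc psi G F H ≤ ∑ _p ∈ F ×ˢ F, 3 := Finset.sum_le_sum (fun p _ => phi_le_three G H _ _)
    _ = (F ×ˢ F).card * 3 := by rw [Finset.sum_const, smul_eq_mul]
    _ = 3 * (F.card * F.card) := by rw [Finset.card_product]; ring

lemma base_ncard [Fintype V] {G : SimpleGraph V} {t : ℕ} {F : Finset (V × Finset V)}
    (hF : Valid G t F) (ht : 1 ≤ t)
    (hmax : ∀ v : V, ((G.neighborFinset v).filter (fun z => z ∉ clustered F)).card < t) :
    (base G F).edgeSet.ncard ≤ Fintype.card V * (t - 1) + Fintype.card V := by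
  classical
  set T := Finset.univ.biUnion (fun v : V =>
    ((G.neighborFinset v).filter (fun z => z ∉ clustered F)).image (fun z => s(v, z))) with hT
  set S := F.biUnion (fun p => p.2.image (fun z => s(p.1, z))) with hS
  have hsub : (base G F).edgeSet ⊆ ((T ∪ S : Finset (Sym2 V)) : Set (Sym2 V)) := by
    intro e he
    induction e using Sym2.ind with
    | _ a b =>
      rw [mem_edgeSet] at he
      obtain ⟨hadj, hcase⟩ := he
      refine Finset.mem_coe.mpr (Finset.mem_union.mpr ?_)
      rcases hcase with hcase | hcase | hcase
      · left
        rw [hT]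
        refine Finset.mem_biUnion.mpr ⟨b, Finset.mem_univ b, ?_⟩
        exact Finset.mem_image.mpr ⟨a,
          Finset.mem_filter.mpr ⟨by rw [mem_neighborFinset]; exact hadj.symm, hcase⟩,
          Sym2.eq_swap⟩
      · left
        rw [hT]
        refine Finset.mem_biUnion.mpr ⟨a, Finset.mem_univ a, ?_⟩
        exact Finset.mem_image.mpr ⟨b,
          Finset.mem_filter.mpr ⟨by rw [mem_neighborFinset]; exact hadj, hcase⟩, rfl⟩
      · right
        rw [hS]
        rcases hcase with ⟨p, hp, ha1, hb2⟩ | ⟨p, hp, hb1, ha2⟩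
        · refine Finset.mem_biUnion.mpr ⟨p, hp, ?_⟩
          exact Finset.mem_image.mpr ⟨b, hb2, by rw [ha1]⟩
        · refine Finset.mem_biUnion.mpr ⟨p, hp, ?_⟩
          refine Finset.mem_image.mpr ⟨a, ha2, ?_⟩
          rw [hb1]
          exact Sym2.eq_swap
  have hTcard : T.card ≤ Fintype.card V * (t - 1) := by
    calc T.card ≤ ∑ v : V, (((G.neighborFinset v).filter
        (fun z => z ∉ clustered F)).image (fun z => s(v, z))).card := Finset.card_biUnion_le
      _ ≤ ∑ _v : V, (t - 1) := Finset.sum_le_sum (fun v _ =>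
          le_trans Finset.card_image_le (by have := hmax v; omega))
      _ = Fintype.card V * (t - 1) := by
          rw [Finset.sum_const, smul_eq_mul, Finset.card_univ]
  have hScard : S.card ≤ Fintype.card V := by
    calc S.card ≤ ∑ p ∈ F, (p.2.image (fun z => s(p.1, z))).card := Finset.card_biUnion_le
      _ ≤ ∑ p ∈ F, t := Finset.sum_le_sum (fun p hp =>
          le_trans Finset.card_image_le (le_of_eq (hF.1 p hp).1))
      _ = F.card * t := by rw [Finset.sum_const, smul_eq_mul]
      _ ≤ Fintype.card V := cluster_count hF
  calc (base G F).edgeSet.ncard ≤ ((T ∪ S : Finset (Sym2 V)) : Set (Sym2 V)).ncard :=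
      Set.ncard_le_ncard hsub (Set.toFinite _)
    _ = (T ∪ S).card := Set.ncard_coe_finset _
    _ ≤ T.card + S.card := Finset.card_union_le _ _
    _ ≤ Fintype.card V * (t - 1) + Fintype.card V := add_le_add hTcard hScard

end AddSpanner

/-- Every finite simple unweighted undirected graph `G` on `n` vertices has an additive
`8`-spanner with at most `26 * n^(4/3) + n` edges: a spanning subgraph `H ≤ G` such that
`d_H(u,v) ≤ d_G(u,v) + 8` for every pair of vertices `u, v` that are connected in `G`. -/
theorem stmt_1 {V : Type*} [Fintype V] (G : SimpleGraph V) :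
    ∃ H : SimpleGraph V, H ≤ G ∧
      (H.edgeSet.ncard : ℝ) ≤
        26 * (Fintype.card V : ℝ) ^ ((4 : ℝ) / 3) + (Fintype.card V : ℝ) ∧
      ∀ u v : V, G.Reachable u v → H.edist u v ≤ G.edist u v + 8 := by
  classical
  by_cases hV : Fintype.card V = 0
  · refine ⟨⊥, bot_le, ?_, ?_⟩
    · rw [SimpleGraph.edgeSet_bot, Set.ncard_empty, hV]
      push_cast
      rw [Real.zero_rpow (by norm_num)]
      norm_num
    · intro u v _
      haveI := Fintype.card_eq_zero_iff.mp hV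
      exact (IsEmpty.false u).elim
  · have hn1 : 1 ≤ Fintype.card V := Nat.one_le_iff_ne_zero.mpr hV
    set n := Fintype.card V with hn
    have hnpos : (0:ℝ) < (n:ℝ) := by exact_mod_cast hn1
    set t : ℕ := ⌈(n : ℝ) ^ ((1:ℝ)/3)⌉₊ with htdef
    have hrpos : (0:ℝ) < (n:ℝ) ^ ((1:ℝ)/3) := Real.rpow_pos_of_pos hnpos _
    have htpos : 1 ≤ t := by
      have := Nat.ceil_pos.mpr hrpos
      omega
    obtain ⟨F, hF, hmax⟩ := AddSpanner.exists_max_family G t htpos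
    set L := ((F ×ˢ F).filter (fun pr => pr.1 ≠ pr.2)).toList with hLdef
    have hL : ∀ pr ∈ L, pr.1 ∈ F ∧ pr.2 ∈ F ∧ pr.1 ≠ pr.2 := by
      intro pr hpr
      rw [hLdef, Finset.mem_toList, Finset.mem_filter, Finset.mem_product] at hpr
      exact ⟨hpr.1.1, hpr.1.2, hpr.2⟩
    obtain ⟨hle, hHG, hcard, hguar⟩ := AddSpanner.foldl_inv hF L hL
      (le_refl (AddSpanner.base G F)) (AddSpanner.base_le G F)
    set H := L.foldl (AddSpanner.step G F) (AddSpanner.base G F) with hHdef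
    have hg : ∀ A ∈ F, ∀ B ∈ F, H.edist A.1 B.1 ≤ G.edist A.1 B.1 + 2 := by
      intro A hA B hB
      by_cases hab : A = B
      · subst hab
        rw [SimpleGraph.edist_self]
        exact zero_le ..
      · refine hguar (A, B) ?_
        rw [hLdef, Finset.mem_toList, Finset.mem_filter, Finset.mem_product]
        exact ⟨⟨hA, hB⟩, hab⟩
    refine ⟨H, hHG, ?_, AddSpanner.stretch hF hle hHG hg⟩
    have h2 := AddSpanner.base_ncard hF htpos hmax
    have h3 := AddSpanner.psi_le G F (AddSpanner.base G F)
    have h4 := AddSpanner.cluster_count hF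
    have h1 : H.edgeSet.ncard ≤ n * (t - 1) + n + 12 * (F.card * F.card) := by
      have hstep : H.edgeSet.ncard ≤ (AddSpanner.base G F).edgeSet.ncard +
          4 * AddSpanner.psi G F (AddSpanner.base G F) := by omega
      calc H.edgeSet.ncard ≤ (AddSpanner.base G F).edgeSet.ncard +
          4 * AddSpanner.psi G F (AddSpanner.base G F) := hstep
        _ ≤ (n * (t - 1) + n) + 4 * (3 * (F.card * F.card)) :=
            add_le_add h2 (Nat.mul_le_mul_left 4 h3)
        _ = n * (t - 1) + n + 12 * (F.card * F.card) := by ring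
    have hcast : (H.edgeSet.ncard : ℝ) ≤
        ((n * (t - 1) + n + 12 * (F.card * F.card) : ℕ) : ℝ) := by
      exact_mod_cast h1
    have hR : (H.edgeSet.ncard : ℝ) ≤ (n:ℝ) * ((t:ℝ) - 1) + (n:ℝ) +
        12 * ((F.card:ℝ) * (F.card:ℝ)) := by
      refine le_trans hcast (le_of_eq ?_)
      push_cast [Nat.cast_sub htpos]
      ring
    have ht1 : (t:ℝ) - 1 ≤ (n:ℝ) ^ ((1:ℝ)/3) := by
      have := Nat.ceil_lt_add_one (le_of_lt hrpos)
      rw [htdef]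
      push_cast
      linarith [this]
    have ht2 : (n:ℝ) ^ ((1:ℝ)/3) ≤ (t:ℝ) := by
      rw [htdef]
      exact Nat.le_ceil _
    have htRpos : (0:ℝ) < (t:ℝ) := by
      have : (1:ℕ) ≤ t := htpos
      exact_mod_cast Nat.lt_of_lt_of_le Nat.zero_lt_one this
    have hq : (F.card : ℝ) ≤ (n:ℝ) / (t:ℝ) := by
      rw [le_div_iff₀ htRpos]
      exact_mod_cast h4
    have hqn : (n:ℝ) / (t:ℝ) ≤ (n:ℝ) ^ ((2:ℝ)/3) := by
      have hdd : (n:ℝ) / (t:ℝ) ≤ (n:ℝ) / ((n:ℝ) ^ ((1:ℝ)/3)) := by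
        gcongr
      have heq : (n:ℝ) / ((n:ℝ) ^ ((1:ℝ)/3)) = (n:ℝ) ^ ((2:ℝ)/3) := by
        rw [show (n:ℝ) / ((n:ℝ) ^ ((1:ℝ)/3)) = (n:ℝ) ^ ((1:ℝ)) / ((n:ℝ) ^ ((1:ℝ)/3)) by
          rw [Real.rpow_one], ← Real.rpow_sub hnpos]
        norm_num
      rw [← heq]
      exact hdd
    have hq2 : (F.card:ℝ) * (F.card:ℝ) ≤ (n:ℝ) ^ ((4:ℝ)/3) := by
      have hq' : (F.card:ℝ) ≤ (n:ℝ) ^ ((2:ℝ)/3) := le_trans hq hqn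
      have h0 : (0:ℝ) ≤ (F.card:ℝ) := Nat.cast_nonneg _
      calc (F.card:ℝ) * (F.card:ℝ) ≤ (n:ℝ) ^ ((2:ℝ)/3) * (n:ℝ) ^ ((2:ℝ)/3) :=
          mul_le_mul hq' hq' h0 (by positivity)
        _ = (n:ℝ) ^ ((4:ℝ)/3) := by
          rw [← Real.rpow_add hnpos]
          norm_num
    have hnt : (n:ℝ) * ((t:ℝ) - 1) ≤ (n:ℝ) ^ ((4:ℝ)/3) := by
      calc (n:ℝ) * ((t:ℝ) - 1) ≤ (n:ℝ) * (n:ℝ) ^ ((1:ℝ)/3) :=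
          mul_le_mul_of_nonneg_left ht1 (le_of_lt hnpos)
        _ = (n:ℝ) ^ ((4:ℝ)/3) := by
          nth_rewrite 1 [← Real.rpow_one (n:ℝ)]
          rw [← Real.rpow_add hnpos]
          norm_num
    have hpow : (0:ℝ) ≤ (n:ℝ) ^ ((4:ℝ)/3) := le_of_lt (Real.rpow_pos_of_pos hnpos _)
    linarith [hR, hnt, hq2, hpow]
end

section
/- Let u_1,…,u_ℓ be a t-clustering of a finite simple unweighted undirected graph G on n vertices. Then the subgraph G_ℓ has at most n·t edges. -/
open SimpleGraph

/-- The closed neighborhood of a vertex as a `Finset`. -/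
def closedNbhd {V : Type*} [Fintype V] [DecidableEq V] (G : SimpleGraph V)
    [DecidableRel G.Adj] (v : V) : Finset V :=
  insert v (G.neighborFinset v)

/-- `clustered G u i` is the union `C_1 ∪ … ∪ C_i` of the first `i` clusters of the
sequence `u` (0-indexed: the clusters of `u 0, …, u (i-1)`).  It equals the union of the
closed neighborhoods of `u 0, …, u (i-1)`. -/
def clustered {V : Type*} [Fintype V] [DecidableEq V] (G : SimpleGraph V)
    [DecidableRel G.Adj] (u : ℕ → V) : ℕ → Finset V
  | 0 => ∅
  | i + 1 => clustered G u i ∪ closedNbhd G (u i)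

/-- The `i`-th cluster `C_i = (Γ_G(u_i) ∪ {u_i}) \ (C_1 ∪ … ∪ C_{i-1})` (0-indexed). -/
def cluster {V : Type*} [Fintype V] [DecidableEq V] (G : SimpleGraph V)
    [DecidableRel G.Adj] (u : ℕ → V) (i : ℕ) : Finset V :=
  closedNbhd G (u i) \ clustered G u i

/-- The graph `G_i`: the subgraph of `G` containing exactly those edges of `G`
whose endpoints do not both lie in `C_1 ∪ … ∪ C_i`. -/
def level {V : Type*} [Fintype V] [DecidableEq V] (G : SimpleGraph V)
    [DecidableRel G.Adj] (u : ℕ → V) (i : ℕ) : SimpleGraph V where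
  Adj a b := G.Adj a b ∧ ¬(a ∈ clustered G u i ∧ b ∈ clustered G u i)
  symm := ⟨fun a b h => ⟨h.1.symm, fun hc => h.2 ⟨hc.2, hc.1⟩⟩⟩
  loopless := ⟨fun a h => G.loopless.irrefl a h.1⟩

/-- `u 0, …, u (ℓ-1)` is a `t`-clustering of `G`:
(i) each `u i` maximizes `|(Γ_G(v) ∪ {v}) \ (C_1 ∪ … ∪ C_{i-1})|` over all vertices `v`,
(ii) every cluster `C_i` has at least `t` vertices, and
(iii) for every vertex `v`, `|(Γ_G(v) ∪ {v}) \ (C_1 ∪ … ∪ C_ℓ)| < t`. -/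
def IsClustering {V : Type*} [Fintype V] [DecidableEq V] (G : SimpleGraph V)
    [DecidableRel G.Adj] (t ℓ : ℕ) (u : ℕ → V) : Prop :=
  (∀ i < ℓ, ∀ v : V,
      (closedNbhd G v \ clustered G u i).card ≤ (cluster G u i).card) ∧
  (∀ i < ℓ, t ≤ (cluster G u i).card) ∧
  (∀ v : V, (closedNbhd G v \ clustered G u ℓ).card < t)

/-- If `u 0, …, u (ℓ-1)` is a `t`-clustering of a finite graph `G` on `n` vertices, then
the subgraph `G_ℓ` has at most `n * t` edges. -/
theorem stmt_2 {V : Type*} [Fintype V] [DecidableEq V] (G : SimpleGraph V)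
    [DecidableRel G.Adj] (t ℓ : ℕ) (u : ℕ → V) (h : IsClustering G t ℓ u) :
    (level G u ℓ).edgeSet.ncard ≤ Fintype.card V * t := by
  classical
  set S := clustered G u ℓ with hS
  -- the target finset of ordered pairs
  set T : Finset (V × V) := Finset.univ.filter (fun p => G.Adj p.1 p.2 ∧ p.2 ∉ S) with hT
  -- the charging function
  set f : Sym2 V → V × V := fun e =>
    if (Quot.out e).2 ∈ S then (Quot.out e).swap else Quot.out e with hf
  have hmk : ∀ e : Sym2 V, Quot.mk (Sym2.Rel V) (f e) = e := by
    intro e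
    by_cases h1 : (Quot.out e).2 ∈ S <;>
      simp only [hf, h1, if_true, if_false]
    · exact (Quot.sound (Sym2.Rel.swap _ _)).trans (Quot.out_eq e)
    · exact Quot.out_eq e
  have hinj : Function.Injective f := by
    intro a b hab
    have := congrArg (Quot.mk (Sym2.Rel V)) hab
    rwa [hmk, hmk] at this
  have hsub : f '' (level G u ℓ).edgeSet ⊆ (T : Set (V × V)) := by
    rintro p ⟨e, he, rfl⟩
    have hadj : (level G u ℓ).Adj (Quot.out e).1 (Quot.out e).2 := by
      rw [← SimpleGraph.mem_edgeSet]
      have : Quot.mk (Sym2.Rel V) (Quot.out e) = e := Quot.out_eq e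
      rw [show s((Quot.out e).1, (Quot.out e).2) = Quot.mk (Sym2.Rel V) (Quot.out e) from rfl, this]
      exact he
    obtain ⟨hG, hnot⟩ := hadj
    by_cases h1 : (Quot.out e).2 ∈ S
    · have h2 : (Quot.out e).1 ∉ S := fun h2 => hnot ⟨h2, h1⟩
      rw [Finset.mem_coe, hT, Finset.mem_filter]
      simp only [hf, if_pos h1, Prod.fst_swap, Prod.snd_swap]
      exact ⟨Finset.mem_univ _, hG.symm, h2⟩
    · rw [Finset.mem_coe, hT, Finset.mem_filter]
      simp only [hf, if_neg h1]
      exact ⟨Finset.mem_univ _, hG, h1⟩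
  have h1 : (level G u ℓ).edgeSet.ncard ≤ T.card := by
    rw [← Set.ncard_image_of_injective _ hinj]
    calc (f '' (level G u ℓ).edgeSet).ncard ≤ (T : Set (V × V)).ncard :=
          Set.ncard_le_ncard hsub T.finite_toSet
      _ = T.card := Set.ncard_coe_finset T
  refine h1.trans ?_
  have hsub2 : T ⊆ Finset.univ.biUnion (fun a => {a} ×ˢ (closedNbhd G a \ S)) := by
    intro p hp
    simp only [hT, Finset.mem_filter, Finset.mem_univ, true_and] at hp
    obtain ⟨hadj, hnS⟩ := hp
    simp only [Finset.mem_biUnion, Finset.mem_univ, true_and]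
    refine ⟨p.1, ?_⟩
    rw [Finset.mem_product]
    refine ⟨Finset.mem_singleton_self _, Finset.mem_sdiff.2 ⟨?_, hnS⟩⟩
    exact Finset.mem_insert.2 (Or.inr ((SimpleGraph.mem_neighborFinset G p.1 p.2).2 hadj))
  calc T.card ≤ (Finset.univ.biUnion (fun a => {a} ×ˢ (closedNbhd G a \ S))).card :=
        Finset.card_le_card hsub2
    _ ≤ ∑ a : V, ({a} ×ˢ (closedNbhd G a \ S)).card := Finset.card_biUnion_le
    _ = ∑ a : V, (closedNbhd G a \ S).card := by
        simp [Finset.card_product]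
    _ ≤ ∑ _a : V, t := Finset.sum_le_sum (fun a _ => (h.2.2 a).le)
    _ = Fintype.card V * t := by simp [Finset.sum_const, Finset.card_univ, mul_comm]
end

section
/- Let u_1,…,u_ℓ be a t-clustering of a finite simple unweighted undirected graph G, and let u, v be vertices of G such that some shortest path from u to v in G is not contained in the subgraph G_ℓ. Then there exists an index i ∈ {1,…,ℓ} such that d_{G_{i-1}}(u_i,u) + d_{G_{i-1}}(u_i,v) ≤ d_G(u,v) + 2 (in particular, u and v are both reachable from u_i in G_{i-1}). -/
open SimpleGraph

lemma edist_split {V : Type*} {H : SimpleGraph V} {a b : V} (p : H.Walk a b) (x y : V)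
    (hxy : s(x, y) ∈ p.edges) :
    H.edist a x + H.edist y b + 1 ≤ (p.length : ℕ∞) ∨
    H.edist a y + H.edist x b + 1 ≤ (p.length : ℕ∞) := by
  induction p with
  | nil => simp at hxy
  | @cons a c b hadj q ih =>
    rw [Walk.edges_cons, List.mem_cons] at hxy
    have hlen : ((Walk.cons hadj q).length : ℕ∞) = (q.length : ℕ∞) + 1 := by
      rw [Walk.length_cons]; push_cast; ring
    have hac : H.edist a c ≤ 1 := le_of_eq (edist_eq_one_iff_adj.mpr hadj)
    cases hxy with
    | inl heq =>
      rw [Sym2.eq_iff] at heq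
      rcases heq with ⟨hx, hy⟩ | ⟨hx, hy⟩
      · left
        subst hx; subst hy
        rw [edist_self, zero_add, hlen]
        exact add_le_add_left (q.edist_le) 1
      · right
        subst hx; subst hy
        rw [SimpleGraph.edist_self, zero_add, hlen]
        exact add_le_add_left (q.edist_le) 1
    | inr hmem =>
      rcases ih hmem with hle | hle
      · left
        calc H.edist a x + H.edist y b + 1
            ≤ (H.edist a c + H.edist c x) + H.edist y b + 1 := by
              gcongr; exact H.edist_triangle
          _ ≤ (1 + H.edist c x) + H.edist y b + 1 := by gcongr
          _ = 1 + (H.edist c x + H.edist y b + 1) := by ring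
          _ ≤ 1 + (q.length : ℕ∞) := by gcongr
          _ = ((Walk.cons hadj q).length : ℕ∞) := by rw [hlen]; ring
      · right
        calc H.edist a y + H.edist x b + 1
            ≤ (H.edist a c + H.edist c y) + H.edist x b + 1 := by
              gcongr; exact H.edist_triangle
          _ ≤ (1 + H.edist c y) + H.edist x b + 1 := by gcongr
          _ = 1 + (H.edist c y + H.edist x b + 1) := by ring
          _ ≤ 1 + (q.length : ℕ∞) := by gcongr
          _ = ((Walk.cons hadj q).length : ℕ∞) := by rw [hlen]; ring

/-- Let `u 0, …, u (ℓ-1)` be a `t`-clustering of a finite graph `G` and let `a`, `b` be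
vertices such that some shortest path from `a` to `b` in `G` is not contained in the
subgraph `G_ℓ`.  Then there is an index `i ∈ {1,…,ℓ}` (0-indexed below, so that the
center `u_i` is `u i` and the graph `G_{i-1}` is `level G u i`) with
`d_{G_{i-1}}(u_i,a) + d_{G_{i-1}}(u_i,b) ≤ d_G(a,b) + 2`; the extended distances (`ℕ∞`)
in particular force `a` and `b` to be reachable from `u i` in that subgraph. -/
theorem stmt_4 {V : Type*} [Fintype V] [DecidableEq V] (G : SimpleGraph V)
    [DecidableRel G.Adj] (t ℓ : ℕ) (u : ℕ → V) (h : IsClustering G t ℓ u)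
    (a b : V)
    (hp : ∃ p : G.Walk a b, p.IsPath ∧ p.length = G.dist a b ∧
      ∃ e ∈ p.edges, e ∉ (level G u ℓ).edgeSet) :
    ∃ i < ℓ, (level G u i).edist (u i) a + (level G u i).edist (u i) b
      ≤ G.edist a b + 2 := by
  classical
  obtain ⟨p, hpath, hlen, e₀, he₀, he₀G⟩ := hp
  have hex : ∃ j, ¬ ∀ e ∈ p.edges, e ∈ (level G u j).edgeSet :=
    ⟨ℓ, fun hall => he₀G (hall e₀ he₀)⟩
  have hjspec := Nat.find_spec hex
  have hjle : Nat.find hex ≤ ℓ := Nat.find_min' hex (fun hall => he₀G (hall e₀ he₀))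
  have hj0 : Nat.find hex ≠ 0 := by
    intro h0
    apply h0 ▸ hjspec
    intro e he
    have heG := p.edges_subset_edgeSet he
    induction e using Sym2.ind with
    | _ x y =>
      rw [mem_edgeSet] at heG ⊢
      exact ⟨heG, by simp [clustered]⟩
  obtain ⟨i, hji⟩ : ∃ i, Nat.find hex = i + 1 :=
    ⟨Nat.find hex - 1, (Nat.succ_pred_eq_of_ne_zero hj0).symm⟩
  have hiℓ : i < ℓ := by omega
  have hQi : ∀ e ∈ p.edges, e ∈ (level G u i).edgeSet := by
    have h' := Nat.find_min hex (m := i) (by omega)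
    rwa [not_not] at h'
  -- the bad edge at level i+1
  rw [hji] at hjspec
  push_neg at hjspec
  obtain ⟨e, he, heN⟩ := hjspec
  induction e using Sym2.ind with
  | _ x y =>
  have hGxy : G.Adj x y := by
    have := p.edges_subset_edgeSet he
    rwa [mem_edgeSet] at this
  have hboth : x ∈ clustered G u (i + 1) ∧ y ∈ clustered G u (i + 1) := by
    by_contra hc
    exact heN ((SimpleGraph.mem_edgeSet _).mpr ⟨hGxy, hc⟩)
  have hlev : (level G u i).Adj x y := by
    have := hQi _ he
    rwa [mem_edgeSet] at this
  have hnboth : ¬(x ∈ clustered G u i ∧ y ∈ clustered G u i) := hlev.2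
  set H := level G u i with hH
  -- key distance bounds
  have key : ∀ z w : V, z ∈ clustered G u (i + 1) → z ∉ clustered G u i → H.Adj z w →
      H.edist (u i) z ≤ 1 ∧ H.edist (u i) w ≤ 2 := by
    intro z w hz1 hz2 hzw
    have hz3 : z ∈ closedNbhd G (u i) := by
      simp only [clustered, Finset.mem_union] at hz1
      tauto
    have h1 : H.edist (u i) z ≤ 1 := by
      rcases Finset.mem_insert.mp hz3 with rfl | hz4
      · simp [SimpleGraph.edist_self]
      · have hadj : H.Adj (u i) z :=
          ⟨(mem_neighborFinset _ _ _).mp hz4, fun hc => hz2 hc.2⟩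
        exact le_of_eq (edist_eq_one_iff_adj.mpr hadj)
    refine ⟨h1, ?_⟩
    calc H.edist (u i) w ≤ H.edist (u i) z + H.edist z w := H.edist_triangle
      _ ≤ 1 + 1 := by
          gcongr
          exact le_of_eq (edist_eq_one_iff_adj.mpr hzw)
      _ = 2 := by norm_num
  have hsum3 : H.edist (u i) x + H.edist (u i) y ≤ 3 := by
    rcases Classical.em (x ∈ clustered G u i) with hx | hx
    · have hy : y ∉ clustered G u i := fun hy => hnboth ⟨hx, hy⟩
      obtain ⟨h1, h2⟩ := key y x hboth.2 hy hlev.symm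
      calc H.edist (u i) x + H.edist (u i) y ≤ 2 + 1 := add_le_add h2 h1
        _ = 3 := by norm_num
    · obtain ⟨h1, h2⟩ := key x y hboth.1 hx hlev
      calc H.edist (u i) x + H.edist (u i) y ≤ 1 + 2 := add_le_add h1 h2
        _ = 3 := by norm_num
  -- transfer shortest path to level i
  have hsplit := edist_split (p.transfer H hQi) x y (by rwa [Walk.edges_transfer])
  rw [Walk.length_transfer] at hsplit
  -- edist a b equals p.length
  have hEab : (p.length : ℕ∞) = G.edist a b := by
    have h1 : G.edist a b ≤ (p.length : ℕ∞) := p.edist_le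
    have h2 : G.edist a b ≠ ⊤ := fun ht => by simp [ht] at h1
    rw [hlen, SimpleGraph.dist, ENat.coe_toNat h2]
  refine ⟨i, hiℓ, ?_⟩
  rw [← hEab]
  rcases hsplit with hle | hle
  · calc H.edist (u i) a + H.edist (u i) b
        ≤ (H.edist (u i) x + H.edist x a) + (H.edist (u i) y + H.edist y b) := by
          gcongr <;> exact H.edist_triangle
      _ = (H.edist (u i) x + H.edist (u i) y) + (H.edist x a + H.edist y b) := by ring
      _ ≤ 3 + (H.edist a x + H.edist y b) := by rw [edist_comm (u := x)]; gcongr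
      _ = 2 + (H.edist a x + H.edist y b + 1) := by ring
      _ ≤ 2 + (p.length : ℕ∞) := by gcongr
      _ = (p.length : ℕ∞) + 2 := by ring
  · calc H.edist (u i) a + H.edist (u i) b
        ≤ (H.edist (u i) y + H.edist y a) + (H.edist (u i) x + H.edist x b) := by
          gcongr <;> exact H.edist_triangle
      _ = (H.edist (u i) x + H.edist (u i) y) + (H.edist y a + H.edist x b) := by ring
      _ ≤ 3 + (H.edist a y + H.edist x b) := by rw [edist_comm (u := y)]; gcongr
      _ = 2 + (H.edist a y + H.edist x b + 1) := by ring
      _ ≤ 2 + (p.length : ℕ∞) := by gcongr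
      _ = (p.length : ℕ∞) + 2 := by ring
end

section
/- Let u_1,…,u_ℓ be a t-clustering of a finite simple unweighted undirected graph G, and for indices i, j ∈ {1,…,ℓ} define δ_{i,j} = min over k ∈ {1,…,ℓ} of (d_{G_{k-1}}(u_k,u_i) + d_{G_{k-1}}(u_k,u_j)). Then for all i, j such that u_i and u_j are connected in G: d_G(u_i,u_j) ≤ δ_{i,j} ≤ d_G(u_i,u_j) + 2. -/
open SimpleGraph

lemma mem_clustered {V : Type*} [Fintype V] [DecidableEq V] (G : SimpleGraph V)
    [DecidableRel G.Adj] (u : ℕ → V) {k : ℕ} {v : V} (hv : v ∈ clustered G u k) :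
    ∃ m < k, v ∈ closedNbhd G (u m) := by
  induction k with
  | zero => simp [clustered] at hv
  | succ k ih =>
    simp only [clustered, Finset.mem_union] at hv
    rcases hv with hv | hv
    · obtain ⟨m, hm, h⟩ := ih hv
      exact ⟨m, hm.trans (Nat.lt_succ_self k), h⟩
    · exact ⟨k, Nat.lt_succ_self k, hv⟩

lemma level_le {V : Type*} [Fintype V] [DecidableEq V] (G : SimpleGraph V)
    [DecidableRel G.Adj] (u : ℕ → V) (k : ℕ) : level G u k ≤ G :=
  fun _ _ h => h.1


/-- Let `u 0, …, u (ℓ-1)` be a `t`-clustering of a finite graph `G` and define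
`δ_{i,j} = min_{k} (d_{G_{k-1}}(u_k, u_i) + d_{G_{k-1}}(u_k, u_j))` (0-indexed: the
minimum over `k < ℓ` of distances in `level G u k`).  Then for all `i, j` such that
`u i` and `u j` are connected in `G` we have
`d_G(u i, u j) ≤ δ_{i,j} ≤ d_G(u i, u j) + 2`. -/
theorem stmt_7 {V : Type*} [Fintype V] [DecidableEq V] (G : SimpleGraph V)
    [DecidableRel G.Adj] (t ℓ : ℕ) (u : ℕ → V) (h : IsClustering G t ℓ u) :
    ∀ i < ℓ, ∀ j < ℓ, G.Reachable (u i) (u j) →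
      G.edist (u i) (u j) ≤
        (Finset.range ℓ).inf
          (fun k => (level G u k).edist (u k) (u i) + (level G u k).edist (u k) (u j)) ∧
      (Finset.range ℓ).inf
          (fun k => (level G u k).edist (u k) (u i) + (level G u k).edist (u k) (u j))
        ≤ G.edist (u i) (u j) + 2 := by
  intro i hi j hj hreach
  constructor
  · -- lower bound
    apply Finset.le_inf
    intro k _
    calc G.edist (u i) (u j) ≤ G.edist (u i) (u k) + G.edist (u k) (u j) :=
          SimpleGraph.edist_triangle
      _ = G.edist (u k) (u i) + G.edist (u k) (u j) := by rw [edist_comm]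
      _ ≤ (level G u k).edist (u k) (u i) + (level G u k).edist (u k) (u j) :=
          add_le_add (edist_anti (level_le G u k)) (edist_anti (level_le G u k))
  · -- upper bound
    classical
    obtain ⟨p, hp⟩ := hreach.exists_walk_length_eq_edist
    set P : ℕ → Prop := fun k => ∃ w ∈ p.support, w ∈ closedNbhd G (u k) with hPdef
    have hPi : P i := ⟨u i, p.start_mem_support, Finset.mem_insert_self _ _⟩
    have hex : ∃ k, P k := ⟨i, hPi⟩
    set k0 := Nat.find hex with hk0
    have hk0ℓ : k0 < ℓ := lt_of_le_of_lt (Nat.find_le hPi) hi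
    obtain ⟨w, hw_sup, hw_nb⟩ := Nat.find_spec hex
    set L := level G u k0 with hL
    have hnc : ∀ x ∈ p.support, x ∉ clustered G u k0 := by
      intro x hx hxc
      obtain ⟨m, hm, hmem⟩ := mem_clustered G u hxc
      exact Nat.find_min hex hm ⟨x, hx, hmem⟩
    have hedges : ∀ e ∈ p.edges, e ∈ L.edgeSet := by
      intro e he
      induction e with
      | h a b =>
        refine ⟨p.edges_subset_edgeSet he, fun hc => ?_⟩
        exact hnc a (p.fst_mem_support_of_mem_edges he) hc.1
    -- walks split at w
    have hT := p.edges_takeUntil_subset hw_sup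
    have hD := p.edges_dropUntil_subset hw_sup
    have hq1 : L.edist w (u i) ≤ ((p.takeUntil w hw_sup).length : ℕ∞) := by
      have := edist_le ((p.takeUntil w hw_sup).transfer L
        (fun e he => hedges e (hT he))).reverse
      simpa using this
    have hq2 : L.edist w (u j) ≤ ((p.dropUntil w hw_sup).length : ℕ∞) := by
      have := edist_le ((p.dropUntil w hw_sup).transfer L
        (fun e he => hedges e (hD he)))
      simpa using this
    have hlen : (p.takeUntil w hw_sup).length + (p.dropUntil w hw_sup).length = p.length := by
      have := congr_arg SimpleGraph.Walk.length (p.take_spec hw_sup)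
      rwa [SimpleGraph.Walk.length_append] at this
    have hnear : L.edist (u k0) w ≤ 1 := by
      rcases Finset.mem_insert.mp hw_nb with rfl | hadj
      · simp [SimpleGraph.edist_self, ← hk0]
      · have hadj' : L.Adj (u k0) w :=
          ⟨(G.mem_neighborFinset _ _).mp hadj, fun hc => hnc w hw_sup hc.2⟩
        calc L.edist (u k0) w ≤ (hadj'.toWalk).length := edist_le _
          _ = 1 := by simp
    have h1 : L.edist (u k0) (u i) ≤ 1 + (p.takeUntil w hw_sup).length := by
      calc L.edist (u k0) (u i) ≤ L.edist (u k0) w + L.edist w (u i) :=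
            SimpleGraph.edist_triangle
        _ ≤ 1 + (p.takeUntil w hw_sup).length := add_le_add hnear hq1
    have h2 : L.edist (u k0) (u j) ≤ 1 + (p.dropUntil w hw_sup).length := by
      calc L.edist (u k0) (u j) ≤ L.edist (u k0) w + L.edist w (u j) :=
            SimpleGraph.edist_triangle
        _ ≤ 1 + (p.dropUntil w hw_sup).length := add_le_add hnear hq2
    refine le_trans (Finset.inf_le (Finset.mem_range.mpr hk0ℓ)) ?_
    calc L.edist (u k0) (u i) + L.edist (u k0) (u j)
        ≤ (1 + (p.takeUntil w hw_sup).length : ℕ∞) +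
          (1 + (p.dropUntil w hw_sup).length : ℕ∞) := add_le_add h1 h2
      _ = ((p.length : ℕ∞) + 2) := by
          push_cast [← hlen]
          ring
      _ = G.edist (u i) (u j) + 2 := by rw [hp]
end

section
/- Let G be a finite simple unweighted undirected graph, let u, v be vertices of G, and let p be a path from u to v in G whose length is at most d_G(u,v) + 2. Let S be a set of vertices lying on p such that any two vertices of S are at distance at most 2 in G. Then |S| ≤ 5. -/
open SimpleGraph

/-- Let `G` be a finite simple graph, `a`, `b` vertices, and `p` a path from `a` to `b`
in `G` whose length is at most `d_G(a,b) + 2`.  If `S` is a set of vertices lying on `p`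
such that any two vertices of `S` are at distance at most `2` in `G`, then `|S| ≤ 5`. -/
theorem stmt_8 {V : Type*} [Fintype V] [DecidableEq V] (G : SimpleGraph V)
    (a b : V) (p : G.Walk a b) (hpath : p.IsPath)
    (hlen : p.length ≤ G.dist a b + 2)
    (S : Finset V) (hS : ∀ x ∈ S, x ∈ p.support)
    (hdist : ∀ x ∈ S, ∀ y ∈ S, G.edist x y ≤ 2) :
    S.card ≤ 5 := by
  classical
  -- the index function
  set f : V → ℕ := fun x => if hx : x ∈ p.support then (p.takeUntil x hx).length else 0 with hf
  have hgv : ∀ x (hx : x ∈ p.support), p.getVert (f x) = x := by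
    intro x hx
    have hfx : f x = (p.takeUntil x hx).length := by simp [hf, hx]
    conv_lhs => rw [← p.take_spec hx]
    rw [Walk.getVert_append, hfx]
    simp
  have hsum : ∀ x (hx : x ∈ p.support),
      f x + (p.dropUntil x hx).length = p.length := by
    intro x hx
    have hfx : f x = (p.takeUntil x hx).length := by simp [hf, hx]
    rw [hfx]
    rw [← Walk.length_append, p.take_spec hx]
  have hinj : Set.InjOn f S := by
    intro x hx y hy hxy
    have := hgv x (hS x hx)
    rw [hxy, hgv y (hS y hy)] at this
    exact this.symm
  -- key inequality
  have key : ∀ x ∈ S, ∀ y ∈ S, f y ≤ f x + 4 := by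
    intro x hxS y hyS
    by_cases hxy : x = y
    · subst hxy; omega
    have hx := hS x hxS
    have hy := hS y hyS
    have hd2 : G.dist x y ≤ 2 := by
      have := hdist x hxS y hyS
      have h2 : G.dist x y = (G.edist x y).toNat := rfl
      rw [h2]
      calc (G.edist x y).toNat ≤ ((2 : ℕ∞)).toNat :=
            ENat.toNat_le_toNat this (by simp)
        _ = 2 := by simp
    have hreach : G.Reachable x y := by
      apply reachable_of_edist_ne_top
      intro h
      have h2 := hdist x hxS y hyS
      rw [h] at h2
      simp at h2
    obtain ⟨w, hw⟩ := hreach.exists_walk_length_eq_dist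
    have hq : G.dist a b ≤ f x + G.dist x y + (p.length - f y) := by
      have := SimpleGraph.dist_le
        ((p.takeUntil x hx).append (w.append (p.dropUntil y hy)))
      simp only [Walk.length_append] at this
      have hfx : f x = (p.takeUntil x hx).length := by simp [hf, hx]
      have hdy := hsum y hy
      omega
    have hyle : f y ≤ p.length := by have := hsum y hy; omega
    omega
  -- counting
  rw [← Finset.card_image_of_injOn hinj]
  rcases (S.image f).eq_empty_or_nonempty with h | h
  · simp [h]
  have hsub : S.image f ⊆ Finset.Icc ((S.image f).min' h) ((S.image f).min' h + 4) := by
    intro n hn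
    obtain ⟨y, hyS, rfl⟩ := Finset.mem_image.mp hn
    obtain ⟨x, hxS, hxm⟩ := Finset.mem_image.mp ((S.image f).min'_mem h)
    rw [Finset.mem_Icc]
    refine ⟨Finset.min'_le _ _ hn, ?_⟩
    rw [← hxm]
    exact key x hxS y hyS
  calc (S.image f).card ≤ _ := Finset.card_le_card hsub
    _ ≤ 5 := by rw [Nat.card_Icc]; omega
end

section
/- Let u_1,…,u_ℓ be a t-clustering of a finite simple unweighted undirected graph G, and let H be a spanning subgraph of G that (a) contains every edge of G_ℓ, (b) contains, for every i ∈ {1,…,ℓ}, every edge of G between u_i and a vertex of C_i \ {u_i}, and (c) satisfies d_H(u_i,u_j) ≤ d_G(u_i,u_j) + 4 for all i, j such that u_i and u_j are connected in G. Then H is an additive 8-spanner of G, i.e., d_H(u,v) ≤ d_G(u,v) + 8 for every pair of vertices u, v connected in G. -/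
open SimpleGraph

section Aux

variable {V : Type*} [Fintype V] [DecidableEq V] (G : SimpleGraph V) [DecidableRel G.Adj]
  (u : ℕ → V)

lemma clustered_mono {i j : ℕ} (h : i ≤ j) : clustered G u i ⊆ clustered G u j := by
  induction j with
  | zero =>
    have : i = 0 := Nat.le_zero.mp h
    subst this; exact subset_rfl
  | succ j ih =>
    rcases Nat.lt_or_ge i (j+1) with hlt | hge
    · exact (ih (Nat.lt_succ_iff.mp hlt)).trans (Finset.subset_union_left)
    · have : i = j + 1 := le_antisymm h hge
      subst this; exact subset_rfl

lemma cluster_subset_clustered {i n : ℕ} (h : i < n) :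
    cluster G u i ⊆ clustered G u n := by
  refine (Finset.sdiff_subset.trans ?_).trans (clustered_mono G u h)
  exact Finset.subset_union_right

lemma exists_cluster_of_mem {x : V} {n : ℕ} (hx : x ∈ clustered G u n) :
    ∃ i < n, x ∈ cluster G u i := by
  induction n with
  | zero => simp [clustered] at hx
  | succ n ih =>
    rw [clustered, Finset.mem_union] at hx
    rcases hx with hx | hx
    · obtain ⟨i, hi, hxi⟩ := ih hx
      exact ⟨i, hi.trans (Nat.lt_succ_self n), hxi⟩
    · by_cases h' : x ∈ clustered G u n
      · obtain ⟨i, hi, hxi⟩ := ih h'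
        exact ⟨i, hi.trans (Nat.lt_succ_self n), hxi⟩
      · exact ⟨n, Nat.lt_succ_self n, Finset.mem_sdiff.mpr ⟨hx, h'⟩⟩

lemma eq_or_adj_of_mem_cluster {x : V} {i : ℕ} (hx : x ∈ cluster G u i) :
    x = u i ∨ G.Adj (u i) x := by
  have := (Finset.mem_sdiff.mp hx).1
  rw [closedNbhd, Finset.mem_insert] at this
  rcases this with h | h
  · exact Or.inl h
  · exact Or.inr (G.mem_neighborFinset _ _ |>.mp h)

lemma edist_le_one_of_mem_cluster {x : V} {i : ℕ} (hx : x ∈ cluster G u i) :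
    G.edist (u i) x ≤ 1 := by
  rcases eq_or_adj_of_mem_cluster G u hx with h | h
  · subst h; simp [SimpleGraph.edist_self]
  · exact (edist_eq_one_iff_adj.mpr h).le

end Aux


/-- Let `u 0, …, u (ℓ-1)` be a `t`-clustering of a finite graph `G`, and let `H` be a
spanning subgraph of `G` that (a) contains every edge of `G_ℓ`, (b) contains, for every
`i < ℓ`, every edge of `G` between `u i` and a vertex of `C_i \ {u i}`, and
(c) satisfies `d_H(u i, u j) ≤ d_G(u i, u j) + 4` for all `i, j` such that `u i` and
`u j` are connected in `G`.  Then `H` is an additive `8`-spanner of `G`. -/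
theorem stmt_9 {V : Type*} [Fintype V] [DecidableEq V] (G : SimpleGraph V)
    [DecidableRel G.Adj] (t ℓ : ℕ) (u : ℕ → V) (h : IsClustering G t ℓ u)
    (H : SimpleGraph V) (hHG : H ≤ G)
    (ha : level G u ℓ ≤ H)
    (hb : ∀ i < ℓ, ∀ x ∈ cluster G u i, x ≠ u i → H.Adj (u i) x)
    (hc : ∀ i < ℓ, ∀ j < ℓ, G.Reachable (u i) (u j) →
      H.edist (u i) (u j) ≤ G.edist (u i) (u j) + 4) :
    ∀ a b : V, G.Reachable a b → H.edist a b ≤ G.edist a b + 8 := by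
  -- H-distance from a cluster center to a cluster member is ≤ 1
  have hB : ∀ i < ℓ, ∀ x ∈ cluster G u i, H.edist (u i) x ≤ 1 := by
    intro i hi x hx
    by_cases hxe : x = u i
    · subst hxe; simp [SimpleGraph.edist_self]
    · exact (edist_eq_one_iff_adj.mpr (hb i hi x hx hxe)).le
  -- the "direct" case: both endpoints clustered
  have direct : ∀ (k : ℕ) (a b : V), G.edist a b ≤ (k : ℕ∞) →
      ∀ i < ℓ, a ∈ cluster G u i → b ∈ clustered G u ℓ →
      H.edist (u i) b ≤ (k : ℕ∞) + 7 := by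
    intro k a b hab i hi hai hbc
    obtain ⟨j, hj, hbj⟩ := exists_cluster_of_mem G u hbc
    have h2 : G.edist (u i) a ≤ 1 := edist_le_one_of_mem_cluster G u hai
    have h3 : G.edist b (u j) ≤ 1 := by
      rw [SimpleGraph.edist_comm]; exact edist_le_one_of_mem_cluster G u hbj
    have hreach : G.Reachable (u i) (u j) := by
      have hra : G.Reachable (u i) a :=
        reachable_of_edist_ne_top (ne_top_of_le_ne_top (by simp) h2)
      have hrab : G.Reachable a b :=
        reachable_of_edist_ne_top (ne_top_of_le_ne_top (ENat.coe_ne_top _) hab)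
      have hrbj : G.Reachable b (u j) :=
        reachable_of_edist_ne_top (ne_top_of_le_ne_top (by simp) h3)
      exact hra.trans (hrab.trans hrbj)
    calc H.edist (u i) b ≤ H.edist (u i) (u j) + H.edist (u j) b :=
          SimpleGraph.edist_triangle
      _ ≤ (G.edist (u i) (u j) + 4) + 1 :=
          add_le_add (hc i hi j hj hreach) (hB j hj b hbj)
      _ ≤ ((G.edist (u i) a + G.edist a b + G.edist b (u j)) + 4) + 1 := by
          gcongr
          calc G.edist (u i) (u j) ≤ G.edist (u i) b + G.edist b (u j) :=
                SimpleGraph.edist_triangle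
            _ ≤ G.edist (u i) a + G.edist a b + G.edist b (u j) :=
                add_le_add_left SimpleGraph.edist_triangle _
      _ ≤ ((1 + (k : ℕ∞) + 1) + 4) + 1 := by gcongr
      _ = (k : ℕ∞) + 7 := by ring
  -- P2: a is clustered, distance from its center to b
  have P2 : ∀ k : ℕ, ∀ a b : V, G.edist a b ≤ (k : ℕ∞) →
      ∀ i < ℓ, a ∈ cluster G u i → H.edist (u i) b ≤ (k : ℕ∞) + 7 := by
    intro k
    induction k with
    | zero =>
      intro a b hab i hi hai
      refine direct 0 a b hab i hi hai ?_
      rw [Nat.cast_zero, nonpos_iff_eq_zero, edist_eq_zero_iff] at hab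
      exact hab ▸ cluster_subset_clustered G u hi hai
    | succ k ih =>
      intro a b hab i hi hai
      by_cases hbc : b ∈ clustered G u ℓ
      · exact direct (k + 1) a b hab i hi hai hbc
      · -- b not clustered: peel the last edge of a shortest walk
        have hne : b ≠ a := by
          rintro rfl
          exact hbc (cluster_subset_clustered G u hi hai)
        have hfin : G.edist a b ≠ ⊤ := ne_top_of_le_ne_top (ENat.coe_ne_top _) hab
        obtain ⟨p, hp⟩ := exists_walk_of_edist_ne_top hfin
        obtain ⟨c, hadj, q, hq⟩ := SimpleGraph.Walk.exists_eq_cons_of_ne hne p.reverse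
        have hlen : q.length + 1 = p.length := by
          have := congrArg SimpleGraph.Walk.length hq
          rw [SimpleGraph.Walk.length_reverse, SimpleGraph.Walk.length_cons] at this
          omega
        have hple : p.length ≤ k + 1 := by
          rw [← hp] at hab; exact_mod_cast hab
        have hac : G.edist a c ≤ (k : ℕ∞) := by
          have h1 : G.edist a c ≤ q.reverse.length := edist_le _
          rw [SimpleGraph.Walk.length_reverse] at h1
          exact h1.trans (by exact_mod_cast Nat.cast_le.mpr (by omega))
        have hic : H.edist (u i) c ≤ (k : ℕ∞) + 7 := ih a c hac i hi hai
        have hcb : H.Adj c b := ha ⟨hadj.symm, fun hcon => hbc hcon.2⟩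
        calc H.edist (u i) b ≤ H.edist (u i) c + H.edist c b :=
              SimpleGraph.edist_triangle
          _ ≤ ((k : ℕ∞) + 7) + 1 :=
              add_le_add hic (edist_eq_one_iff_adj.mpr hcb).le
          _ = ((k : ℕ∞) + 1) + 7 := by ring
          _ = ((k + 1 : ℕ) : ℕ∞) + 7 := by push_cast; ring
  -- P1: the main bound
  have P1 : ∀ k : ℕ, ∀ a b : V, G.edist a b ≤ (k : ℕ∞) →
      H.edist a b ≤ (k : ℕ∞) + 8 := by
    intro k
    induction k with
    | zero =>
      intro a b hab
      rw [Nat.cast_zero, nonpos_iff_eq_zero, edist_eq_zero_iff] at hab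
      subst hab; simp [SimpleGraph.edist_self]
    | succ k ih =>
      intro a b hab
      by_cases hac : a ∈ clustered G u ℓ
      · obtain ⟨i, hi, hai⟩ := exists_cluster_of_mem G u hac
        calc H.edist a b ≤ H.edist a (u i) + H.edist (u i) b :=
              SimpleGraph.edist_triangle
          _ ≤ 1 + (((k + 1 : ℕ) : ℕ∞) + 7) := by
              refine add_le_add ?_ (P2 (k + 1) a b hab i hi hai)
              rw [SimpleGraph.edist_comm]; exact hB i hi a hai
          _ = ((k + 1 : ℕ) : ℕ∞) + 8 := by push_cast; ring
      · by_cases heq : a = b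
        · subst heq; simp [SimpleGraph.edist_self]
        · have hfin : G.edist a b ≠ ⊤ := ne_top_of_le_ne_top (ENat.coe_ne_top _) hab
          obtain ⟨p, hp⟩ := exists_walk_of_edist_ne_top hfin
          obtain ⟨c, hadj, q, hq⟩ := SimpleGraph.Walk.exists_eq_cons_of_ne heq p
          have hlen : q.length + 1 = p.length := by
            have := congrArg SimpleGraph.Walk.length hq
            rw [SimpleGraph.Walk.length_cons] at this
            omega
          have hple : p.length ≤ k + 1 := by
            rw [← hp] at hab; exact_mod_cast hab
          have hcb : G.edist c b ≤ (k : ℕ∞) := by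
            have h1 : G.edist c b ≤ q.length := edist_le _
            exact h1.trans (by exact_mod_cast Nat.cast_le.mpr (by omega))
          have hHac : H.Adj a c := ha ⟨hadj, fun hcon => hac hcon.1⟩
          calc H.edist a b ≤ H.edist a c + H.edist c b := SimpleGraph.edist_triangle
            _ ≤ 1 + ((k : ℕ∞) + 8) :=
                add_le_add (edist_eq_one_iff_adj.mpr hHac).le (ih c b hcb)
            _ = ((k + 1 : ℕ) : ℕ∞) + 8 := by push_cast; ring
  intro a b hr
  have hfin : G.edist a b ≠ ⊤ := edist_ne_top_iff_reachable.mpr hr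
  lift G.edist a b to ℕ using hfin with k hk
  exact P1 k a b hk.ge
end
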